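/- arXiv:2009.08172 — 9 statements merged into one kernel-verified Lean document; each statement's English description precedes it below -/
import Mathlib

section
/- The 3-dimensional matching problem reduces to the 3-covariate κ-fine-balance selection problem: given a finite set X and U ⊆ X×X×X, construct the 3-covariate instance where each covariate has levels X ∪ {0,0'}, the treatment group consists of samples (i,i,i) for i ∈ X together with |X| copies each of (0,0,0) and (0',0',0'), and the control group consists of (u_1,u_2,u_3) for each u ∈ U, plus (κ−1) copies of each of (i,0',0), (0',0,i), (0,i,0') for every i ∈ X, plus |X| copies each of (0,0,0) and (0',0',0'). Then there exists a pair (S,S') satisfying the 3-covariate κ-fine-balance constraints with |S| = 3|X| if and only if there exists M ⊆ U with |M| = |X| such that no two elements of M agree in any coordinate. -/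
open Finset

/-- Treatment samples of the 3-dimensional-matching reduction: `(i,i,i)` for `i ∈ X`,
`|X|` copies of `(0,0,0)` (indexed by `X`) and `|X|` copies of `(0',0',0')`. -/
def tdmLevT {X : Type*} : (X ⊕ X ⊕ X) → Fin 3 → X ⊕ Fin 2
  | Sum.inl i, _ => Sum.inl i
  | Sum.inr (Sum.inl _), _ => Sum.inr 0
  | Sum.inr (Sum.inr _), _ => Sum.inr 1

/-- Control samples of the reduction: `C₁` indexed by `U`, `C₂` consisting of copies
(indexed by `W`, instantiated as `Fin (κ-1)`) of `(i,0',0)`, `(0',0,i)`, `(0,i,0')` for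
`i ∈ X`, and `C₃`: `|X|` copies each of `(0,0,0)` and `(0',0',0')`. -/
def tdmLevC {X W : Type*} (U : Finset (X × X × X)) :
    ({u // u ∈ U} ⊕ (X × Fin 3 × W) ⊕ (X ⊕ X)) → Fin 3 → X ⊕ Fin 2
  | Sum.inl u, p => ![Sum.inl u.1.1, Sum.inl u.1.2.1, Sum.inl u.1.2.2] p
  | Sum.inr (Sum.inl (i, j, _)), p =>
      ![![Sum.inl i, Sum.inr 1, Sum.inr 0],
        ![Sum.inr 1, Sum.inr 0, Sum.inl i],
        ![Sum.inr 0, Sum.inl i, Sum.inr 1]] j p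
  | Sum.inr (Sum.inr (Sum.inl _)), _ => Sum.inr 0
  | Sum.inr (Sum.inr (Sum.inr _)), _ => Sum.inr 1

section Aux

lemma tdm_card_filter_sum {α β : Type*} (s : Finset (α ⊕ β)) (P : α ⊕ β → Prop)
    [DecidablePred P] :
    (s.filter P).card = (s.toLeft.filter (fun a => P (Sum.inl a))).card
      + (s.toRight.filter (fun b => P (Sum.inr b))).card := by
  rw [← card_toLeft_add_card_toRight (u := s.filter P)]
  congr 1 <;> · congr 1; ext a; simp

lemma tdm_card_filter_attach {α : Type*} [DecidableEq α] (U : Finset α) (Q : α → Prop)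
    [DecidablePred Q] :
    ((univ : Finset {u // u ∈ U}).filter (fun u => Q u.1)).card = (U.filter Q).card := by
  rw [univ_eq_attach, Finset.filter_attach]
  simp

variable {X : Type*} [Fintype X] [DecidableEq X]

lemma tdm_t_inl (p : Fin 3) (i : X) :
    ((univ : Finset (X ⊕ X ⊕ X)).filter (fun t => tdmLevT t p = Sum.inl i)).card = 1 := by
  have : (univ : Finset (X ⊕ X ⊕ X)).filter (fun t => tdmLevT t p = Sum.inl i)
      = {Sum.inl i} := by
    ext t; rw [mem_filter]; rcases t with j | j | j <;> simp [tdmLevT]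
  rw [this]; simp

lemma tdm_t_inr0 (p : Fin 3) :
    ((univ : Finset (X ⊕ X ⊕ X)).filter (fun t => tdmLevT t p = Sum.inr 0)).card
      = Fintype.card X := by
  have : (univ : Finset (X ⊕ X ⊕ X)).filter (fun t => tdmLevT t p = Sum.inr 0)
      = univ.image (fun i => Sum.inr (Sum.inl i)) := by
    ext t; rw [mem_filter]; rcases t with j | j | j <;> simp [tdmLevT]
  rw [this, card_image_of_injective _ (fun a b h => by simpa using h)]
  simp

lemma tdm_t_inr1 (p : Fin 3) :
    ((univ : Finset (X ⊕ X ⊕ X)).filter (fun t => tdmLevT t p = Sum.inr 1)).card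
      = Fintype.card X := by
  have : (univ : Finset (X ⊕ X ⊕ X)).filter (fun t => tdmLevT t p = Sum.inr 1)
      = univ.image (fun i => Sum.inr (Sum.inr i)) := by
    ext t; rw [mem_filter]; rcases t with j | j | j <;> simp [tdmLevT]
  rw [this, card_image_of_injective _ (fun a b h => by simpa using h)]
  simp

lemma tdm_dum1 (m : ℕ) (i : X) (j : Fin 3) :
    ((univ : Finset (X × Fin 3 × Fin m)).filter (fun x => x.1 = i ∧ x.2.1 = j)).card = m := by
  have : (univ : Finset (X × Fin 3 × Fin m)).filter (fun x => x.1 = i ∧ x.2.1 = j)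
      = univ.image (fun w => (i, j, w)) := by
    ext ⟨a, b, c⟩; simp; aesop
  rw [this, card_image_of_injective _ (fun a b h => by simpa using h)]
  simp

lemma tdm_dum2 (m : ℕ) (j : Fin 3) :
    ((univ : Finset (X × Fin 3 × Fin m)).filter (fun x => x.2.1 = j)).card
      = Fintype.card X * m := by
  have : (univ : Finset (X × Fin 3 × Fin m)).filter (fun x => x.2.1 = j)
      = univ.image (fun iw : X × Fin m => (iw.1, j, iw.2)) := by
    ext ⟨a, b, c⟩; simp; aesop
  rw [this, card_image_of_injective _ (fun a b h => by
    have h' : a.1 = b.1 ∧ a.2 = b.2 := by simpa using h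
    exact Prod.ext h'.1 h'.2)]
  simp

lemma tdm_cleft (t : Bool) :
    ((univ : Finset (X ⊕ X)).filter (fun y => y.isLeft = t)).card = Fintype.card X := by
  cases t
  · have : (univ : Finset (X ⊕ X)).filter (fun y => y.isLeft = false)
        = univ.image Sum.inr := by
      ext y; rcases y with y | y <;> simp
    rw [this, card_image_of_injective _ Sum.inr_injective]; simp
  · have : (univ : Finset (X ⊕ X)).filter (fun y => y.isLeft = true)
        = univ.image Sum.inl := by
      ext y; rcases y with y | y <;> simp
    rw [this, card_image_of_injective _ Sum.inl_injective]; simp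

omit [DecidableEq X] in
lemma tdm_all_one {f : X → ℕ} (h1 : ∀ i, 1 ≤ f i) (h2 : ∑ i, f i ≤ Fintype.card X) (i : X) :
    f i = 1 := by
  by_contra hne
  have h2i : (2:ℕ) ≤ f i := by have := h1 i; omega
  have hlt : ∑ _j : X, (1:ℕ) < ∑ j, f j :=
    Finset.sum_lt_sum (fun j _ => h1 j) ⟨i, mem_univ i, by omega⟩
  simp at hlt
  omega

lemma tdm_fiber_one {M : Finset (X × X × X)} (f : X × X × X → X)
    (hinj : ∀ u ∈ M, ∀ v ∈ M, f u = f v → u = v)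
    (hcard : M.card = Fintype.card X) (i : X) :
    (M.filter (fun m => f m = i)).card = 1 := by
  have himg : M.image f = univ := by
    apply Finset.eq_univ_of_card
    rw [Finset.card_image_of_injOn (fun u hu v hv => hinj u hu v hv), hcard]
  obtain ⟨m, hm, hfm⟩ := Finset.mem_image.mp (himg ▸ mem_univ i)
  refine Finset.card_eq_one.mpr ⟨m, ?_⟩
  ext m'
  simp only [mem_filter, mem_singleton]
  constructor
  · rintro ⟨hm', hf⟩; exact hinj m' hm' m hm (by rw [hf, hfm])
  · rintro rfl; exact ⟨hm, hfm⟩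

end Aux

set_option maxHeartbeats 2000000 in
/-- 3-dimensional matching reduces to the 3-covariate κ-fine-balance
selection problem: the constructed instance has a κ-fine-balanced pair `(S,S')` with
`|S| = 3|X|` iff there is a 3-dimensional matching `M ⊆ U` of size `|X|`. -/
theorem stmt_5 {X : Type*} [Fintype X] [DecidableEq X]
    (U : Finset (X × X × X)) (κ : ℕ) (hκ : 1 ≤ κ) :
    (∃ (S : Finset (X ⊕ X ⊕ X))
       (S' : Finset ({u // u ∈ U} ⊕ (X × Fin 3 × Fin (κ - 1)) ⊕ (X ⊕ X))),
       (∀ (p : Fin 3) (v : X ⊕ Fin 2),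
         κ * (S.filter (fun t => tdmLevT t p = v)).card
           = (S'.filter (fun c => tdmLevC U c p = v)).card) ∧
       S.card = 3 * Fintype.card X)
    ↔ ∃ M ⊆ U, M.card = Fintype.card X ∧
        ∀ u ∈ M, ∀ v ∈ M, u ≠ v →
          u.1 ≠ v.1 ∧ u.2.1 ≠ v.2.1 ∧ u.2.2 ≠ v.2.2 := by
  set n := Fintype.card X with hn
  have hcard3 : Fintype.card (X ⊕ X ⊕ X) = 3 * n := by
    simp [Fintype.card_sum, ← hn]; ring
  constructor
  · rintro ⟨S, S', h, hS⟩
    have hSu : S = univ := Finset.eq_univ_of_card S (by rw [hS, hcard3])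
    subst hSu
    set A := S'.toLeft with hA
    set B := S'.toRight.toLeft with hB
    set C := S'.toRight.toRight with hC
    -- the three `inl i` equations
    have e1 : ∀ i : X, (A.filter (fun u => u.1.1 = i)).card
        + (B.filter (fun x => x.1 = i ∧ x.2.1 = 0)).card = κ := by
      intro i
      have h' := h 0 (Sum.inl i)
      rw [tdm_t_inl, tdm_card_filter_sum, tdm_card_filter_sum] at h'
      have cA : A.filter (fun u => tdmLevC (W := Fin (κ-1)) U (Sum.inl u) 0 = Sum.inl i)
          = A.filter (fun u => u.1.1 = i) :=
        filter_congr (by rintro u _; simp [tdmLevC])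
      have cB : B.filter (fun x => tdmLevC U (Sum.inr (Sum.inl x)) 0 = Sum.inl i)
          = B.filter (fun x => x.1 = i ∧ x.2.1 = 0) :=
        filter_congr (by rintro ⟨a, b, c⟩ _; fin_cases b <;> simp [tdmLevC])
      have cC : C.filter (fun y =>
            tdmLevC (W := Fin (κ-1)) U (Sum.inr (Sum.inr y)) 0 = Sum.inl i) = ∅ :=
        filter_eq_empty_iff.mpr (by rintro (y | y) _ <;> simp [tdmLevC])
      rw [← hA, ← hB, ← hC] at h'
      simp only [cA, cB, cC, card_empty] at h'
      omega
    have e2 : ∀ i : X, (A.filter (fun u => u.1.2.1 = i)).card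
        + (B.filter (fun x => x.1 = i ∧ x.2.1 = 2)).card = κ := by
      intro i
      have h' := h 1 (Sum.inl i)
      rw [tdm_t_inl, tdm_card_filter_sum, tdm_card_filter_sum] at h'
      have cA : A.filter (fun u => tdmLevC (W := Fin (κ-1)) U (Sum.inl u) 1 = Sum.inl i)
          = A.filter (fun u => u.1.2.1 = i) :=
        filter_congr (by rintro u _; simp [tdmLevC])
      have cB : B.filter (fun x => tdmLevC U (Sum.inr (Sum.inl x)) 1 = Sum.inl i)
          = B.filter (fun x => x.1 = i ∧ x.2.1 = 2) :=
        filter_congr (by rintro ⟨a, b, c⟩ _; fin_cases b <;> simp [tdmLevC])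
      have cC : C.filter (fun y =>
            tdmLevC (W := Fin (κ-1)) U (Sum.inr (Sum.inr y)) 1 = Sum.inl i) = ∅ :=
        filter_eq_empty_iff.mpr (by rintro (y | y) _ <;> simp [tdmLevC])
      rw [← hA, ← hB, ← hC] at h'
      simp only [cA, cB, cC, card_empty] at h'
      omega
    have e3 : ∀ i : X, (A.filter (fun u => u.1.2.2 = i)).card
        + (B.filter (fun x => x.1 = i ∧ x.2.1 = 1)).card = κ := by
      intro i
      have h' := h 2 (Sum.inl i)
      rw [tdm_t_inl, tdm_card_filter_sum, tdm_card_filter_sum] at h'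
      have cA : A.filter (fun u => tdmLevC (W := Fin (κ-1)) U (Sum.inl u) 2 = Sum.inl i)
          = A.filter (fun u => u.1.2.2 = i) :=
        filter_congr (by rintro u _; simp [tdmLevC])
      have cB : B.filter (fun x => tdmLevC U (Sum.inr (Sum.inl x)) 2 = Sum.inl i)
          = B.filter (fun x => x.1 = i ∧ x.2.1 = 1) :=
        filter_congr (by rintro ⟨a, b, c⟩ _; fin_cases b <;> simp [tdmLevC])
      have cC : C.filter (fun y =>
            tdmLevC (W := Fin (κ-1)) U (Sum.inr (Sum.inr y)) 2 = Sum.inl i) = ∅ :=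
        filter_eq_empty_iff.mpr (by rintro (y | y) _ <;> simp [tdmLevC])
      rw [← hA, ← hB, ← hC] at h'
      simp only [cA, cB, cC, card_empty] at h'
      omega
    -- the (p = 2, v = inr 0) equation
    have e4 : κ * n = (B.filter (fun x => x.2.1 = (0 : Fin 3))).card
        + (C.filter (fun y => y.isLeft = true)).card := by
      have h' := h 2 (Sum.inr 0)
      rw [tdm_t_inr0, tdm_card_filter_sum, tdm_card_filter_sum] at h'
      have cA : A.filter (fun u =>
            tdmLevC (W := Fin (κ-1)) U (Sum.inl u) 2 = Sum.inr 0) = ∅ :=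
        filter_eq_empty_iff.mpr (by rintro u _; simp [tdmLevC])
      have cB : B.filter (fun x => tdmLevC U (Sum.inr (Sum.inl x)) 2 = Sum.inr 0)
          = B.filter (fun x => x.2.1 = 0) :=
        filter_congr (by rintro ⟨a, b, c⟩ _; fin_cases b <;> simp [tdmLevC])
      have cC : C.filter (fun y =>
            tdmLevC (W := Fin (κ-1)) U (Sum.inr (Sum.inr y)) 2 = Sum.inr 0)
          = C.filter (fun y => y.isLeft = true) :=
        filter_congr (by rintro (y | y) _ <;> simp [tdmLevC])
      rw [← hA, ← hB, ← hC] at h'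
      simp only [cA, cB, cC, card_empty, ← hn] at h'
      omega
    -- bounds
    have bbound : ∀ (i : X) (j : Fin 3),
        (B.filter (fun x => x.1 = i ∧ x.2.1 = j)).card ≤ κ - 1 := fun i j =>
      le_trans (card_le_card (filter_subset_filter _ (subset_univ B)))
        (le_of_eq (tdm_dum1 (κ-1) i j))
    have cbound : (C.filter (fun y => y.isLeft = true)).card ≤ n :=
      le_trans (card_le_card (filter_subset_filter _ (subset_univ C)))
        (le_of_eq (tdm_cleft true))
    -- fiberwise sums
    have sumA0 : A.card = ∑ i, (A.filter (fun u => u.1.1 = i)).card :=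
      card_eq_sum_card_fiberwise (f := fun u : {u // u ∈ U} => u.1.1) (fun _ _ => mem_univ _)
    have sumA1 : A.card = ∑ i, (A.filter (fun u => u.1.2.1 = i)).card :=
      card_eq_sum_card_fiberwise (f := fun u : {u // u ∈ U} => u.1.2.1) (fun _ _ => mem_univ _)
    have sumA2 : A.card = ∑ i, (A.filter (fun u => u.1.2.2 = i)).card :=
      card_eq_sum_card_fiberwise (f := fun u : {u // u ∈ U} => u.1.2.2) (fun _ _ => mem_univ _)
    have sumB0 : (B.filter (fun x => x.2.1 = (0 : Fin 3))).card
        = ∑ i, (B.filter (fun x => x.1 = i ∧ x.2.1 = 0)).card := by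
      rw [card_eq_sum_card_fiberwise (f := fun x : X × Fin 3 × Fin (κ-1) => x.1) (t := univ) (fun _ _ => mem_univ _)]
      exact Finset.sum_congr rfl fun i _ => by
        rw [filter_filter]
        exact congrArg Finset.card (filter_congr fun x _ => by tauto)
    -- A.card = n and fibers are singletons
    have key0 : ∀ i, 1 ≤ (A.filter (fun u => u.1.1 = i)).card := fun i => by
      have := e1 i; have := bbound i 0; omega
    have key1 : ∀ i, 1 ≤ (A.filter (fun u => u.1.2.1 = i)).card := fun i => by
      have := e2 i; have := bbound i 2; omega
    have key2 : ∀ i, 1 ≤ (A.filter (fun u => u.1.2.2 = i)).card := fun i => by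
      have := e3 i; have := bbound i 1; omega
    have hsum : A.card + (B.filter (fun x => x.2.1 = (0 : Fin 3))).card = κ * n := by
      rw [sumA0, sumB0, ← Finset.sum_add_distrib,
        Finset.sum_congr rfl fun i _ => e1 i]
      simp [← hn, mul_comm]
    have hAle : A.card ≤ n := by omega
    have hAge : n ≤ A.card := by
      have := Finset.sum_le_sum (s := univ) (fun i (_ : i ∈ univ) => key0 i)
      simp only [← sumA0] at this
      simpa [← hn] using this
    have hAn : A.card = n := le_antisymm hAle hAge
    have a0one : ∀ i, (A.filter (fun u => u.1.1 = i)).card = 1 :=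
      tdm_all_one key0 (by rw [← sumA0, hAn])
    have a1one : ∀ i, (A.filter (fun u => u.1.2.1 = i)).card = 1 :=
      tdm_all_one key1 (by rw [← sumA1, hAn])
    have a2one : ∀ i, (A.filter (fun u => u.1.2.2 = i)).card = 1 :=
      tdm_all_one key2 (by rw [← sumA2, hAn])
    -- build the matching
    refine ⟨A.image (fun u => u.1), ?_, ?_, ?_⟩
    · intro m hm
      obtain ⟨u, _, rfl⟩ := Finset.mem_image.mp hm
      exact u.2
    · rw [Finset.card_image_of_injective _ Subtype.val_injective, hAn]
    · intro u hu v hv huv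
      obtain ⟨u', hu', rfl⟩ := Finset.mem_image.mp hu
      obtain ⟨v', hv', rfl⟩ := Finset.mem_image.mp hv
      have hne : u' ≠ v' := fun hh => huv (congrArg _ hh)
      refine ⟨fun hh => ?_, fun hh => ?_, fun hh => ?_⟩
      · have : 1 < (A.filter (fun u => u.1.1 = v'.1.1)).card :=
          Finset.one_lt_card.mpr
            ⟨u', mem_filter.mpr ⟨hu', hh⟩, v', mem_filter.mpr ⟨hv', rfl⟩, hne⟩
        have := a0one v'.1.1; omega
      · have : 1 < (A.filter (fun u => u.1.2.1 = v'.1.2.1)).card :=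
          Finset.one_lt_card.mpr
            ⟨u', mem_filter.mpr ⟨hu', hh⟩, v', mem_filter.mpr ⟨hv', rfl⟩, hne⟩
        have := a1one v'.1.2.1; omega
      · have : 1 < (A.filter (fun u => u.1.2.2 = v'.1.2.2)).card :=
          Finset.one_lt_card.mpr
            ⟨u', mem_filter.mpr ⟨hu', hh⟩, v', mem_filter.mpr ⟨hv', rfl⟩, hne⟩
        have := a2one v'.1.2.2; omega
  · rintro ⟨M, hMU, hMcard, hM⟩
    refine ⟨univ, ((univ : Finset {u // u ∈ U}).filter
      (fun u : {u // u ∈ U} => (u : X × X × X) ∈ M)).disjSum univ, ?_,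
      by rw [card_univ, hcard3]⟩
    -- injectivity of projections on M
    have hi1 : ∀ u ∈ M, ∀ v ∈ M, u.1 = v.1 → u = v := by
      intro u hu v hv hh
      by_contra hne
      exact (hM u hu v hv hne).1 hh
    have hi2 : ∀ u ∈ M, ∀ v ∈ M, u.2.1 = v.2.1 → u = v := by
      intro u hu v hv hh
      by_contra hne
      exact (hM u hu v hv hne).2.1 hh
    have hi3 : ∀ u ∈ M, ∀ v ∈ M, u.2.2 = v.2.2 → u = v := by
      intro u hu v hv hh
      by_contra hne
      exact (hM u hu v hv hne).2.2 hh
    -- count of the selected `U`-controls in a fiber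
    have hAone : ∀ (f : X × X × X → X), (∀ u ∈ M, ∀ v ∈ M, f u = f v → u = v) →
        ∀ i : X, (((univ : Finset {u // u ∈ U}).filter (fun u : {u // u ∈ U} => (u : X × X × X) ∈ M)).filter
          (fun u => f u.1 = i)).card = 1 := by
      intro f hf i
      rw [filter_filter]
      rw [tdm_card_filter_attach U (fun m => m ∈ M ∧ f m = i)]
      have : U.filter (fun m => m ∈ M ∧ f m = i) = M.filter (fun m => f m = i) := by
        ext m
        simp only [mem_filter]
        exact ⟨fun hh => ⟨hh.2.1, hh.2.2⟩, fun hh => ⟨hMU hh.1, hh.1, hh.2⟩⟩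
      rw [this]
      exact tdm_fiber_one f hf hMcard i
    intro p v

    have hL := Finset.toLeft_disjSum (s := (univ : Finset {u // u ∈ U}).filter
      (fun u : {u // u ∈ U} => (u : X × X × X) ∈ M)) (t := (univ : Finset ((X × Fin 3 × Fin (κ-1)) ⊕ (X ⊕ X))))
    have hR := Finset.toRight_disjSum (s := (univ : Finset {u // u ∈ U}).filter
      (fun u : {u // u ∈ U} => (u : X × X × X) ∈ M)) (t := (univ : Finset ((X × Fin 3 × Fin (κ-1)) ⊕ (X ⊕ X))))
    have huL : (univ : Finset ((X × Fin 3 × Fin (κ-1)) ⊕ (X ⊕ X))).toLeft = univ := by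
      ext x; simp
    have huR : (univ : Finset ((X × Fin 3 × Fin (κ-1)) ⊕ (X ⊕ X))).toRight = univ := by
      ext x; simp
    rw [tdm_card_filter_sum (((univ : Finset {u // u ∈ U}).filter
        (fun u : {u // u ∈ U} => (u : X × X × X) ∈ M)).disjSum univ), hL, hR,
      tdm_card_filter_sum (univ : Finset ((X × Fin 3 × Fin (κ-1)) ⊕ (X ⊕ X))), huL, huR]
    rcases v with i | b
    · -- v = Sum.inl i
      rw [tdm_t_inl]
      have cA : ((univ : Finset {u // u ∈ U}).filter
            (fun u : {u // u ∈ U} => (u : X × X × X) ∈ M)).filter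
            (fun u => tdmLevC (W := Fin (κ-1)) U (Sum.inl u) p = Sum.inl i)
          = ((univ : Finset {u // u ∈ U}).filter (fun u : {u // u ∈ U} => (u : X × X × X) ∈ M)).filter
            (fun u => ![u.1.1, u.1.2.1, u.1.2.2] p = i) :=
        filter_congr (by intro u _; fin_cases p <;> simp [tdmLevC])
      have cB : (univ : Finset (X × Fin 3 × Fin (κ-1))).filter
            (fun x => tdmLevC U (Sum.inr (Sum.inl x)) p = Sum.inl i)
          = univ.filter (fun x => x.1 = i ∧ x.2.1 = ![0, 2, 1] p) :=
        filter_congr (by rintro ⟨a, b, c⟩ _; fin_cases p <;> fin_cases b <;>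
          simp [tdmLevC])
      have cC : (univ : Finset (X ⊕ X)).filter
            (fun y => tdmLevC (W := Fin (κ-1)) U (Sum.inr (Sum.inr y)) p = Sum.inl i) = ∅ :=
        filter_eq_empty_iff.mpr (by rintro (y | y) _ <;> simp [tdmLevC])
      rw [cA, cB, cC, card_empty, tdm_dum1]
      have hf : ∀ u ∈ M, ∀ v ∈ M,
          (fun m : X × X × X => ![m.1, m.2.1, m.2.2] p) u
            = (fun m : X × X × X => ![m.1, m.2.1, m.2.2] p) v → u = v := by
        intro u hu v hv
        fin_cases p <;> simp only [Matrix.cons_val_zero, Matrix.cons_val_one,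
          Matrix.head_cons, Matrix.cons_val_two, Matrix.tail_cons]
        · exact hi1 u hu v hv
        · exact hi2 u hu v hv
        · exact hi3 u hu v hv
      rw [hAone (fun m => ![m.1, m.2.1, m.2.2] p) hf i]
      omega
    · -- v = Sum.inr b
      have hT : ((univ : Finset (X ⊕ X ⊕ X)).filter
          (fun t => tdmLevT t p = Sum.inr b)).card = n := by
        fin_cases b
        · exact tdm_t_inr0 p
        · exact tdm_t_inr1 p
      rw [hT]
      have cA : ((univ : Finset {u // u ∈ U}).filter
            (fun u : {u // u ∈ U} => (u : X × X × X) ∈ M)).filter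
            (fun u => tdmLevC (W := Fin (κ-1)) U (Sum.inl u) p = Sum.inr b) = ∅ :=
        filter_eq_empty_iff.mpr (by rintro u _; fin_cases p <;> simp [tdmLevC])
      have cB : (univ : Finset (X × Fin 3 × Fin (κ-1))).filter
            (fun x => tdmLevC U (Sum.inr (Sum.inl x)) p = Sum.inr b)
          = univ.filter (fun x => x.2.1 = ![![2, 1, 0], ![1, 0, 2]] b p) :=
        filter_congr (by rintro ⟨a, j, c⟩ _; fin_cases b <;> fin_cases p <;>
          fin_cases j <;> simp [tdmLevC])
      have cC : (univ : Finset (X ⊕ X)).filter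
            (fun y => tdmLevC (W := Fin (κ-1)) U (Sum.inr (Sum.inr y)) p = Sum.inr b)
          = univ.filter (fun y => y.isLeft = decide (b = 0)) :=
        filter_congr (by rintro (y | y) _ <;> fin_cases b <;> simp [tdmLevC])
      rw [cA, cB, cC, card_empty, tdm_dum2, tdm_cleft]
      zify [hκ]
      ring
end

section
/- In the 3-dimensional matching reduction instance, any feasible selection (S,S') for the 3-covariate κ-fine-balance problem with |S| = 3|X| must select all treatment samples and all control samples in C_2 ∪ C_3, where C_2 consists of the (κ−1) copies of (i,0',0), (0',0,i), (0,i,0') for i ∈ X and C_3 consists of the |X| copies each of (0,0,0) and (0',0',0'). -/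
open Finset

/-- Treatment-side count: exactly `|X|` treatment samples have level `Sum.inr v`
at any covariate. -/
lemma tdm_cardT {X : Type*} [Fintype X] [DecidableEq X] (p : Fin 3) (v : Fin 2) :
    ((univ : Finset (X ⊕ X ⊕ X)).filter (fun t => tdmLevT t p = Sum.inr v)).card
      = Fintype.card X := by
  rw [← Finset.card_univ (α := X)]
  apply Finset.card_nbij'
    (i := fun t => match t with
      | Sum.inl i => i | Sum.inr (Sum.inl i) => i | Sum.inr (Sum.inr i) => i)
    (j := fun i => match v with
      | 0 => Sum.inr (Sum.inl i) | 1 => Sum.inr (Sum.inr i))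
  · intro a _; exact mem_univ _
  · intro a _
    rw [Finset.mem_coe]; fin_cases v <;> exact Finset.mem_filter.mpr ⟨mem_univ _, rfl⟩
  · intro a ha
    simp only [Finset.mem_coe, mem_filter] at ha
    rcases a with i | i | i
    · simp [tdmLevT] at ha
    · have : v = 0 := by
        have := ha.2; simp [tdmLevT] at this; omega
      subst this; rfl
    · have : v = 1 := by
        have := ha.2; simp [tdmLevT] at this; omega
      subst this; rfl
  · intro b _
    fin_cases v <;> rfl

/-- Control-side count: exactly `κ·|X|` control samples have level `Sum.inr v`
at any covariate. -/
lemma tdm_cardC {X : Type*} [Fintype X] [DecidableEq X]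
    (U : Finset (X × X × X)) (κ : ℕ) (hκ : 1 ≤ κ) (p : Fin 3) (v : Fin 2) :
    ((univ : Finset ({u // u ∈ U} ⊕ (X × Fin 3 × Fin (κ - 1)) ⊕ (X ⊕ X))).filter
        (fun c => tdmLevC U c p = Sum.inr v)).card
      = κ * Fintype.card X := by
  have hcard : (univ : Finset ((X × Fin (κ - 1)) ⊕ X)).card = κ * Fintype.card X := by
    simp [Fintype.card_sum, Fintype.card_prod]
    calc Fintype.card X * (κ - 1) + Fintype.card X
        = Fintype.card X * ((κ - 1) + 1) := by rw [Nat.mul_succ]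
      _ = κ * Fintype.card X := by rw [Nat.sub_add_cancel hκ, Nat.mul_comm]
  rw [← hcard]
  apply Finset.card_nbij'
    (i := fun c => match c with
      | Sum.inl u => Sum.inr u.1.1
      | Sum.inr (Sum.inl (i, _, w)) => Sum.inl (i, w)
      | Sum.inr (Sum.inr (Sum.inl i)) => Sum.inr i
      | Sum.inr (Sum.inr (Sum.inr i)) => Sum.inr i)
    (j := fun b => match b with
      | Sum.inl (i, w) => Sum.inr (Sum.inl (i, ![![2,1,0], ![1,0,2]] v p, w))
      | Sum.inr i => Sum.inr (Sum.inr (match v with | 0 => Sum.inl i | 1 => Sum.inr i)))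
  · intro a _; exact mem_univ _
  · intro b _
    simp only [mem_filter, mem_univ, true_and]
    rcases b with ⟨i, w⟩ | i
    · fin_cases v <;> fin_cases p <;> simp [tdmLevC]
    · fin_cases v <;> simp [tdmLevC]
  · intro a ha
    simp only [Finset.mem_coe, mem_filter, mem_univ, true_and] at ha
    rcases a with u | ⟨i, j, w⟩ | i | i
    · fin_cases p <;> simp [tdmLevC] at ha
    · have : ![![2,1,0], ![1,0,2]] v p = j := by
        fin_cases v <;> fin_cases j <;> fin_cases p <;>
          simp_all [tdmLevC]
      simp [this]
    · have : v = 0 := by simp [tdmLevC] at ha; omega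
      subst this; rfl
    · have : v = 1 := by simp [tdmLevC] at ha; omega
      subst this; rfl
  · intro b _
    rcases b with ⟨i, w⟩ | i
    · rfl
    · fin_cases v <;> rfl

/-- In the 3-dimensional-matching reduction instance, any feasible selection
`(S,S')` with `|S| = 3|X|` must select all treatment samples, and all control samples
in `C₂ ∪ C₃`. -/
theorem stmt_6 {X : Type*} [Fintype X] [DecidableEq X]
    (U : Finset (X × X × X)) (κ : ℕ) (hκ : 1 ≤ κ)
    (S : Finset (X ⊕ X ⊕ X))
    (S' : Finset ({u // u ∈ U} ⊕ (X × Fin 3 × Fin (κ - 1)) ⊕ (X ⊕ X)))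
    (hfb : ∀ (p : Fin 3) (v : X ⊕ Fin 2),
      κ * (S.filter (fun t => tdmLevT t p = v)).card
        = (S'.filter (fun c => tdmLevC U c p = v)).card)
    (hcard : S.card = 3 * Fintype.card X) :
    S = Finset.univ ∧
    ∀ y : (X × Fin 3 × Fin (κ - 1)) ⊕ (X ⊕ X), Sum.inr y ∈ S' := by
  have hSuniv : S = Finset.univ := by
    apply Finset.eq_univ_of_card
    rw [hcard]
    simp [Fintype.card_sum]
    ring
  refine ⟨hSuniv, ?_⟩
  have key : ∀ (p : Fin 3) (v : Fin 2),
      S'.filter (fun c => tdmLevC U c p = Sum.inr v)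
        = univ.filter (fun c => tdmLevC U c p = Sum.inr v) := by
    intro p v
    apply Finset.eq_of_subset_of_card_le
      (Finset.filter_subset_filter _ (Finset.subset_univ S'))
    rw [tdm_cardC U κ hκ p v, ← hfb p (Sum.inr v), hSuniv, tdm_cardT p v]
  have mem_of : ∀ (p : Fin 3) (v : Fin 2)
      (y : (X × Fin 3 × Fin (κ - 1)) ⊕ (X ⊕ X)),
      tdmLevC U (Sum.inr y) p = Sum.inr v → Sum.inr y ∈ S' := by
    intro p v y hy
    have : (Sum.inr y : {u // u ∈ U} ⊕ _) ∈
        S'.filter (fun c => tdmLevC U c p = Sum.inr v) := by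
      rw [key p v]
      simp [hy]
    exact (Finset.mem_filter.mp this).1
  intro y
  rcases y with ⟨i, j, w⟩ | i | i
  · apply mem_of (![2,1,0] j) 0
    fin_cases j <;> simp [tdmLevC]
  · exact mem_of 0 0 _ rfl
  · exact mem_of 0 1 _ rfl
end

section
/- The integer program max ∑_{i_1,i_2} x_{i_1,i_2} subject to ∑_{i_2} x_{i_1,i_2} = ∑_{i_2} x'_{i_1,i_2} for all i_1, ∑_{i_1} x_{i_1,i_2} = ∑_{i_1} x'_{i_1,i_2} for all i_2, 0 ≤ x_{i_1,i_2} ≤ u_{i_1,i_2}, 0 ≤ x'_{i_1,i_2} ≤ u'_{i_1,i_2}, with integer variables, has optimal value equal to the maximum of |S| over all (S,S') satisfying the 2-covariate fine-balance constraints, where u_{i_1,i_2} = |L_{1,i_1} ∩ L_{2,i_2}| and u'_{i_1,i_2} = |L'_{1,i_1} ∩ L'_{2,i_2}|. -/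
open Finset

lemma stmt7_fiber_sum {α : Type*} {k1 k2 : ℕ} (S : Finset α) (f : α → Fin k1)
    (g : α → Fin k2) (i1 : Fin k1) :
    ∑ i2, (S.filter (fun t => f t = i1 ∧ g t = i2)).card
      = (S.filter (fun t => f t = i1)).card := by
  rw [Finset.card_eq_sum_card_fiberwise (f := g) (t := Finset.univ)
    (fun x _ => Finset.mem_univ _)]
  refine Finset.sum_congr rfl fun i2 _ => ?_
  rw [Finset.filter_filter]

lemma stmt7_fiber_sum' {α : Type*} {k1 k2 : ℕ} (S : Finset α) (f : α → Fin k1)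
    (g : α → Fin k2) (i2 : Fin k2) :
    ∑ i1, (S.filter (fun t => f t = i1 ∧ g t = i2)).card
      = (S.filter (fun t => g t = i2)).card := by
  rw [Finset.card_eq_sum_card_fiberwise (f := f) (t := Finset.univ)
    (fun x _ => Finset.mem_univ _)]
  refine Finset.sum_congr rfl fun i1 _ => ?_
  rw [Finset.filter_filter]
  congr 1
  exact Finset.filter_congr fun a _ => ⟨fun h => ⟨h.2, h.1⟩, fun h => ⟨h.2, h.1⟩⟩

lemma stmt7_exists_subset_cells {α : Type*} {k1 k2 : ℕ} (T : Finset α)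
    (f : α → Fin k1) (g : α → Fin k2) (x : Fin k1 → Fin k2 → ℕ)
    (hx : ∀ i1 i2, x i1 i2 ≤ (T.filter (fun t => f t = i1 ∧ g t = i2)).card) :
    ∃ S ⊆ T, ∀ i1 i2, (S.filter (fun t => f t = i1 ∧ g t = i2)).card = x i1 i2 := by
  classical
  choose Sc hSc hScc using fun i1 i2 => Finset.exists_subset_card_eq (hx i1 i2)
  refine ⟨Finset.univ.biUnion (fun p : Fin k1 × Fin k2 => Sc p.1 p.2), ?_, ?_⟩
  · intro a ha
    simp only [Finset.mem_biUnion] at ha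
    obtain ⟨p, _, hp⟩ := ha
    exact (Finset.filter_subset _ _) (hSc p.1 p.2 hp)
  · intro i1 i2
    have key : (Finset.univ.biUnion (fun p : Fin k1 × Fin k2 => Sc p.1 p.2)).filter
        (fun t => f t = i1 ∧ g t = i2) = Sc i1 i2 := by
      ext a
      simp only [Finset.mem_filter, Finset.mem_biUnion, Finset.mem_univ, true_and]
      constructor
      · rintro ⟨⟨p, hp⟩, hf, hg⟩
        have hm := hSc p.1 p.2 hp
        simp only [Finset.mem_filter] at hm
        obtain ⟨-, h1, h2⟩ := hm
        have e1 : p.1 = i1 := h1.symm.trans hf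
        have e2 : p.2 = i2 := h2.symm.trans hg
        exact e1 ▸ e2 ▸ hp
      · intro ha
        have hm := hSc i1 i2 ha
        simp only [Finset.mem_filter] at hm
        exact ⟨⟨(i1, i2), ha⟩, hm.2⟩
    rw [key, hScc]

/-- The optimal value of the 2-covariate FBS integer program (variables
`x`, `x'` with matching row and column sums and the level-intersection capacities) equals
the maximum of `|S|` over all fine-balanced pairs `(S,S')`. -/
theorem stmt_7 {α β : Type*} (k1 k2 : ℕ) (T : Finset α) (C : Finset β)
    (levT1 : α → Fin k1) (levT2 : α → Fin k2)
    (levC1 : β → Fin k1) (levC2 : β → Fin k2) :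
    sSup {m : ℕ | ∃ (x x' : Fin k1 → Fin k2 → ℕ),
      (∀ i1, ∑ i2, x i1 i2 = ∑ i2, x' i1 i2) ∧
      (∀ i2, ∑ i1, x i1 i2 = ∑ i1, x' i1 i2) ∧
      (∀ i1 i2, x i1 i2 ≤ (T.filter (fun t => levT1 t = i1 ∧ levT2 t = i2)).card) ∧
      (∀ i1 i2, x' i1 i2 ≤ (C.filter (fun c => levC1 c = i1 ∧ levC2 c = i2)).card) ∧
      ∑ i1, ∑ i2, x i1 i2 = m}
    = sSup {m : ℕ | ∃ S ⊆ T, ∃ S' ⊆ C,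
      (∀ i1, (S.filter (fun t => levT1 t = i1)).card
        = (S'.filter (fun c => levC1 c = i1)).card) ∧
      (∀ i2, (S.filter (fun t => levT2 t = i2)).card
        = (S'.filter (fun c => levC2 c = i2)).card) ∧
      S.card = m} := by
  congr 1
  ext m
  simp only [Set.mem_setOf_eq]
  constructor
  · rintro ⟨x, x', h1, h2, hu, hu', hsum⟩
    obtain ⟨S, hST, hS⟩ := stmt7_exists_subset_cells T levT1 levT2 x hu
    obtain ⟨S', hSC, hS'⟩ := stmt7_exists_subset_cells C levC1 levC2 x' hu'
    refine ⟨S, hST, S', hSC, ?_, ?_, ?_⟩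
    · intro i1
      rw [← stmt7_fiber_sum S levT1 levT2 i1, ← stmt7_fiber_sum S' levC1 levC2 i1]
      simp only [hS, hS']
      exact h1 i1
    · intro i2
      rw [← stmt7_fiber_sum' S levT1 levT2 i2, ← stmt7_fiber_sum' S' levC1 levC2 i2]
      simp only [hS, hS']
      exact h2 i2
    · rw [Finset.card_eq_sum_card_fiberwise (f := levT1) (t := Finset.univ)
        (fun a _ => Finset.mem_univ _), ← hsum]
      refine Finset.sum_congr rfl fun i1 _ => ?_
      rw [← stmt7_fiber_sum S levT1 levT2 i1]
      simp only [hS]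
  · rintro ⟨S, hST, S', hSC, hb1, hb2, hcard⟩
    refine ⟨fun i1 i2 => (S.filter (fun t => levT1 t = i1 ∧ levT2 t = i2)).card,
      fun i1 i2 => (S'.filter (fun c => levC1 c = i1 ∧ levC2 c = i2)).card,
      ?_, ?_, ?_, ?_, ?_⟩
    · intro i1
      rw [stmt7_fiber_sum, stmt7_fiber_sum]
      exact hb1 i1
    · intro i2
      rw [stmt7_fiber_sum', stmt7_fiber_sum']
      exact hb2 i2
    · intro i1 i2
      exact Finset.card_le_card (Finset.filter_subset_filter _ hST)
    · intro i1 i2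
      exact Finset.card_le_card (Finset.filter_subset_filter _ hSC)
    · rw [← hcard, Finset.card_eq_sum_card_fiberwise (f := levT1) (t := Finset.univ)
        (fun a _ => Finset.mem_univ _)]
      refine Finset.sum_congr rfl fun i1 _ => ?_
      rw [stmt7_fiber_sum]
end

section
/- The exact 3-cover problem reduces to the 2-covariate κ-fine-balance selection problem for κ ≥ 3: for the constructed instance (covariate 1 levels indexed by C ∪ E, covariate 2 levels indexed by E ∪ {X}; treatment samples (T,X) for T ∈ C and (e',e'') for e ∈ E; control samples (T,e_{t_1}''),(T,e_{t_2}''),(T,e_{t_3}'') and κ−3 copies of (T,X) for each triplet T = {e_{t_1},e_{t_2},e_{t_3}} ∈ C, plus (e',X) and κ−1 copies of (e',e'') for each e ∈ E), there is a feasible pair (S,S') satisfying 2-covariate κ-fine-balance with |S| ≥ 4q if and only if there is a subcollection C' ⊆ C such that each element of E appears in exactly one triplet of C'. -/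
open Finset

/-- Control samples of the exact-3-cover reduction: for each triplet `T ∈ C` the samples
`(T, e'')` for `e ∈ T` and copies (indexed by `W3`, instantiated as `Fin (κ-3)`) of
`(T, X)`; and for each `e ∈ E` the sample `(e', X)` and copies (indexed by `W1`,
instantiated as `Fin (κ-1)`) of `(e', e'')`. -/
abbrev x3cCty (E : Type*) (Cc : Finset (Finset E)) (W3 W1 : Type*) :=
  {p : {T // T ∈ Cc} × E // p.2 ∈ p.1.1} ⊕ ({T // T ∈ Cc} × W3) ⊕ E ⊕ (E × W1)

/-- Covariate-1 level (an element of `C ⊕ E`) of a treatment sample. -/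
def x3cLevT1 {E : Type*} {Cc : Finset (Finset E)} :
    ({T // T ∈ Cc} ⊕ E) → ({T // T ∈ Cc} ⊕ E)
  | t => t

/-- Covariate-2 level (`none` is the level `X`) of a treatment sample. -/
def x3cLevT2 {E : Type*} {Cc : Finset (Finset E)} : ({T // T ∈ Cc} ⊕ E) → Option E
  | Sum.inl _ => none
  | Sum.inr e => some e

/-- Covariate-1 level of a control sample. -/
def x3cLevC1 {E : Type*} {Cc : Finset (Finset E)} {W3 W1 : Type*} :
    x3cCty E Cc W3 W1 → ({T // T ∈ Cc} ⊕ E)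
  | Sum.inl p => Sum.inl p.1.1
  | Sum.inr (Sum.inl (T, _)) => Sum.inl T
  | Sum.inr (Sum.inr (Sum.inl e)) => Sum.inr e
  | Sum.inr (Sum.inr (Sum.inr (e, _))) => Sum.inr e

/-- Covariate-2 level of a control sample. -/
def x3cLevC2 {E : Type*} {Cc : Finset (Finset E)} {W3 W1 : Type*} :
    x3cCty E Cc W3 W1 → Option E
  | Sum.inl p => some p.1.2
  | Sum.inr (Sum.inl _) => none
  | Sum.inr (Sum.inr (Sum.inl _)) => none
  | Sum.inr (Sum.inr (Sum.inr (e, _))) => some e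

/- ------------------- auxiliary lemmas ------------------- -/

section Aux

variable {E : Type*} {Cc : Finset (Finset E)} {W3 W1 : Type*}

@[simp] lemma x3cLevC1_inl (p : {p : {T // T ∈ Cc} × E // p.2 ∈ p.1.1}) :
    x3cLevC1 (W3 := W3) (W1 := W1) (Sum.inl p) = Sum.inl p.1.1 := rfl

@[simp] lemma x3cLevC1_inrl (b : {T // T ∈ Cc} × W3) :
    x3cLevC1 (E := E) (W1 := W1) (Sum.inr (Sum.inl b)) = Sum.inl b.1 := rfl

@[simp] lemma x3cLevC1_inrrl (e : E) :
    x3cLevC1 (Cc := Cc) (W3 := W3) (W1 := W1) (Sum.inr (Sum.inr (Sum.inl e))) = Sum.inr e := rfl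

@[simp] lemma x3cLevC1_inrrr (d : E × W1) :
    x3cLevC1 (Cc := Cc) (W3 := W3) (Sum.inr (Sum.inr (Sum.inr d))) = Sum.inr d.1 := rfl

@[simp] lemma x3cLevC2_inl (p : {p : {T // T ∈ Cc} × E // p.2 ∈ p.1.1}) :
    x3cLevC2 (W3 := W3) (W1 := W1) (Sum.inl p) = some p.1.2 := rfl

@[simp] lemma x3cLevC2_inrl (b : {T // T ∈ Cc} × W3) :
    x3cLevC2 (E := E) (W1 := W1) (Sum.inr (Sum.inl b)) = none := rfl

@[simp] lemma x3cLevC2_inrrl (e : E) :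
    x3cLevC2 (Cc := Cc) (W3 := W3) (W1 := W1) (Sum.inr (Sum.inr (Sum.inl e))) = none := rfl

@[simp] lemma x3cLevC2_inrrr (d : E × W1) :
    x3cLevC2 (Cc := Cc) (W3 := W3) (Sum.inr (Sum.inr (Sum.inr d))) = some d.1 := rfl

@[simp] lemma x3cLevT1_eq (t : {T // T ∈ Cc} ⊕ E) : x3cLevT1 t = t := rfl

@[simp] lemma x3cLevT2_inl (T : {T // T ∈ Cc}) :
    x3cLevT2 (Sum.inl T : {T // T ∈ Cc} ⊕ E) = none := rfl

@[simp] lemma x3cLevT2_inr (e : E) :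
    x3cLevT2 (Sum.inr e : {T // T ∈ Cc} ⊕ E) = some e := rfl

end Aux

lemma filter_sum_card {α β : Type*} (s : Finset (α ⊕ β)) (p : α ⊕ β → Prop) [DecidablePred p] :
    (s.filter p).card
      = (s.toLeft.filter (fun a => p (Sum.inl a))).card
        + (s.toRight.filter (fun b => p (Sum.inr b))).card := by
  rw [← card_toLeft_add_card_toRight (u := s.filter p)]
  have h1 : (s.filter p).toLeft = s.toLeft.filter (fun a => p (Sum.inl a)) := by ext x; simp
  have h2 : (s.filter p).toRight = s.toRight.filter (fun b => p (Sum.inr b)) := by ext x; simp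
  rw [h1, h2]

lemma fst_fiber_card {α β : Type*} [DecidableEq α] [Fintype α] [Fintype β] (a : α) :
    ((univ : Finset (α × β)).filter (fun x => x.1 = a)).card = Fintype.card β := by
  rw [show (univ : Finset (α × β)).filter (fun x => x.1 = a) = {a} ×ˢ univ by
    ext x; simp [Prod.ext_iff, eq_comm]]
  simp

lemma card_filter_eq_ite {α : Type*} [DecidableEq α] (s : Finset α) (a : α) :
    (s.filter (fun x => x = a)).card = if a ∈ s then 1 else 0 := by
  rw [Finset.filter_eq']; split <;> simp

/-- Exact 3-cover reduces to the 2-covariate κ-FBS problem for `κ ≥ 3`: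
the constructed instance has a κ-fine-balanced pair `(S,S')` with `|S| ≥ 4q` iff
there is an exact 3-cover `C' ⊆ C`. -/
theorem stmt_9 {E : Type*} [Fintype E] [DecidableEq E] (q : ℕ)
    (hE : Fintype.card E = 3 * q)
    (Cc : Finset (Finset E)) (hCc : ∀ T ∈ Cc, T.card = 3)
    (κ : ℕ) (hκ : 3 ≤ κ) :
    (∃ (S : Finset ({T // T ∈ Cc} ⊕ E))
       (S' : Finset (x3cCty E Cc (Fin (κ - 3)) (Fin (κ - 1)))),
       (∀ v : {T // T ∈ Cc} ⊕ E,
         κ * (S.filter (fun t => x3cLevT1 t = v)).card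
           = (S'.filter (fun c => x3cLevC1 c = v)).card) ∧
       (∀ v : Option E,
         κ * (S.filter (fun t => x3cLevT2 t = v)).card
           = (S'.filter (fun c => x3cLevC2 c = v)).card) ∧
       4 * q ≤ S.card)
    ↔ ∃ C' ⊆ Cc, ∀ e : E, ∃! T, T ∈ C' ∧ e ∈ T := by
  classical
  have hA3 : ∀ T : {T // T ∈ Cc},
      ((univ : Finset {p : {T // T ∈ Cc} × E // p.2 ∈ p.1.1}).filter
        (fun p => p.1.1 = T)).card = 3 := by
    intro T
    rw [← hCc T.1 T.2]
    apply Finset.card_nbij (i := fun p => p.1.2)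
    · intro p hp
      simp only [mem_coe, coe_filter, Set.mem_setOf_eq, mem_filter, mem_univ, true_and] at hp
      have := p.2
      rw [hp] at this
      exact this
    · intro p hp q hq h
      simp only [coe_filter, Set.mem_setOf_eq] at hp hq
      exact Subtype.ext (Prod.ext (hp.2.trans hq.2.symm) h)
    · intro e he
      exact ⟨⟨(T, e), he⟩, by simp, rfl⟩
  constructor
  · rintro ⟨S, S', h1, h2, hS⟩
    have hSle : ∀ v, (S.filter (fun t => x3cLevT1 t = v)).card = if v ∈ S then 1 else 0 := by
      intro v
      convert card_filter_eq_ite S v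
      rfl
    -- per-level decompositions
    have h1T : ∀ T : {T // T ∈ Cc}, κ * (if Sum.inl T ∈ S then 1 else 0)
        = (S'.toLeft.filter (fun p => p.1.1 = T)).card
          + (S'.toRight.toLeft.filter (fun x => x.1 = T)).card := by
      intro T
      have h := h1 (Sum.inl T)
      rw [hSle] at h
      rw [filter_sum_card S', filter_sum_card S'.toRight,
        filter_sum_card S'.toRight.toRight] at h
      simpa using h
    have h1e : ∀ e : E, κ * (if Sum.inr e ∈ S then 1 else 0)
        = (S'.toRight.toRight.toLeft.filter (fun x => x = e)).card
          + (S'.toRight.toRight.toRight.filter (fun x => x.1 = e)).card := by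
      intro e
      have h := h1 (Sum.inr e)
      rw [hSle] at h
      rw [filter_sum_card S', filter_sum_card S'.toRight,
        filter_sum_card S'.toRight.toRight] at h
      simpa using h
    have h2e : ∀ e : E, κ * (if Sum.inr e ∈ S then 1 else 0)
        = (S'.toLeft.filter (fun p => p.1.2 = e)).card
          + (S'.toRight.toRight.toRight.filter (fun x => x.1 = e)).card := by
      intro e
      have h := h2 (some e)
      rw [filter_sum_card S, filter_sum_card S', filter_sum_card S'.toRight,
        filter_sum_card S'.toRight.toRight] at h
      have hl : (S.toRight.filter (fun b => x3cLevT2 (Sum.inr b : {T // T ∈ Cc} ⊕ E)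
          = some e)).card = if Sum.inr e ∈ S then 1 else 0 := by
        simp only [x3cLevT2_inr, Option.some.injEq]
        rw [card_filter_eq_ite]
        simp [mem_toRight]
      simp only [x3cLevT2_inl, x3cLevC2_inl, x3cLevC2_inrl, x3cLevC2_inrrl, x3cLevC2_inrrr] at h
      simp only [filter_false, reduceCtorEq, card_empty, zero_add, add_zero,
        Option.some.injEq] at h
      rw [hl] at h
      simpa using h
    have h2none : κ * S.toLeft.card
        = (S'.toRight.toLeft).card + (S'.toRight.toRight.toLeft).card := by
      have h := h2 none
      rw [filter_sum_card S, filter_sum_card S', filter_sum_card S'.toRight,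
        filter_sum_card S'.toRight.toRight] at h
      simpa using h
    -- cardinal bounds
    have bndA : ∀ T : {T // T ∈ Cc}, (S'.toLeft.filter (fun p => p.1.1 = T)).card ≤ 3 := by
      intro T
      calc (S'.toLeft.filter (fun p => p.1.1 = T)).card
          ≤ ((univ : Finset {p : {T // T ∈ Cc} × E // p.2 ∈ p.1.1}).filter
            (fun p => p.1.1 = T)).card :=
            Finset.card_le_card (Finset.filter_subset_filter _ (subset_univ _))
        _ = 3 := hA3 T
    have bndB : ∀ T : {T // T ∈ Cc},
        (S'.toRight.toLeft.filter (fun x => x.1 = T)).card ≤ κ - 3 := by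
      intro T
      calc (S'.toRight.toLeft.filter (fun x => x.1 = T)).card
          ≤ ((univ : Finset ({T // T ∈ Cc} × Fin (κ - 3))).filter (fun x => x.1 = T)).card :=
            Finset.card_le_card (Finset.filter_subset_filter _ (subset_univ _))
        _ = κ - 3 := by rw [fst_fiber_card]; simp
    have bndC : ∀ e : E, (S'.toRight.toRight.toLeft.filter (fun x => x = e)).card ≤ 1 := by
      intro e
      rw [card_filter_eq_ite]
      split <;> omega
    have bndD : ∀ e : E,
        (S'.toRight.toRight.toRight.filter (fun x => x.1 = e)).card ≤ κ - 1 := by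
      intro e
      calc (S'.toRight.toRight.toRight.filter (fun x => x.1 = e)).card
          ≤ ((univ : Finset (E × Fin (κ - 1))).filter (fun x => x.1 = e)).card :=
            Finset.card_le_card (Finset.filter_subset_filter _ (subset_univ _))
        _ = κ - 1 := by rw [fst_fiber_card]; simp
    -- forced structure
    have keyAfull : ∀ T : {T // T ∈ Cc}, Sum.inl T ∈ S →
        S'.toLeft.filter (fun p => p.1.1 = T)
          = (univ : Finset {p : {T // T ∈ Cc} × E // p.2 ∈ p.1.1}).filter
              (fun p => p.1.1 = T) := by
      intro T hT
      refine Finset.eq_of_subset_of_card_le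
        (Finset.filter_subset_filter _ (subset_univ _)) ?_
      have h := h1T T
      rw [if_pos hT, mul_one] at h
      have := bndB T
      rw [hA3 T]
      omega
    have keyAempty : ∀ T : {T // T ∈ Cc}, Sum.inl T ∉ S →
        S'.toLeft.filter (fun p => p.1.1 = T) = ∅ := by
      intro T hT
      have h := h1T T
      rw [if_neg hT, mul_zero] at h
      exact Finset.card_eq_zero.1 (by omega)
    have keyBcard : ∀ T : {T // T ∈ Cc},
        (S'.toRight.toLeft.filter (fun x => x.1 = T)).card
          = if Sum.inl T ∈ S then κ - 3 else 0 := by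
      intro T
      have h := h1T T
      have hb := bndB T
      have ha := bndA T
      split
      · next hT => rw [if_pos hT, mul_one] at h; omega
      · next hT => rw [if_neg hT, mul_zero] at h; omega
    have keyCcard : ∀ e : E,
        (S'.toRight.toRight.toLeft.filter (fun x => x = e)).card
          = if Sum.inr e ∈ S then 1 else 0 := by
      intro e
      have h := h1e e
      have hc := bndC e
      have hd := bndD e
      split
      · next he => rw [if_pos he, mul_one] at h; omega
      · next he => rw [if_neg he, mul_zero] at h; omega
    have keyDcard : ∀ e : E,
        (S'.toRight.toRight.toRight.filter (fun x => x.1 = e)).card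
          = if Sum.inr e ∈ S then κ - 1 else 0 := by
      intro e
      have h := h1e e
      have hc := bndC e
      have hd := bndD e
      split
      · next he => rw [if_pos he, mul_one] at h; omega
      · next he => rw [if_neg he, mul_zero] at h; omega
    have keyAe : ∀ e : E,
        (S'.toLeft.filter (fun p => p.1.2 = e)).card
          = if Sum.inr e ∈ S then 1 else 0 := by
      intro e
      have h := h2e e
      rw [keyDcard e] at h
      by_cases he : Sum.inr e ∈ S <;> simp only [he, if_true, if_false, mul_one, mul_zero] at h ⊢ <;>
        omega
    -- A-fibers over elements count chosen triplets containing the element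
    have key2 : ∀ e : E,
        (S'.toLeft.filter (fun p => p.1.2 = e)).card
          = (S.toLeft.filter (fun T => e ∈ T.1)).card := by
      intro e
      apply Finset.card_nbij (i := fun p => p.1.1)
      · intro p hp
        simp only [coe_filter, Set.mem_setOf_eq, mem_filter] at hp ⊢
        refine ⟨?_, ?_⟩
        · rw [mem_toLeft]
          by_contra hc
          have := keyAempty p.1.1 hc
          have hmem : p ∈ S'.toLeft.filter (fun r => r.1.1 = p.1.1) :=
            mem_filter.2 ⟨hp.1, rfl⟩
          rw [this] at hmem
          exact absurd hmem (Finset.notMem_empty _)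
        · have := p.2
          rw [hp.2] at this
          exact this
      · intro p hp r hr h
        simp only [coe_filter, Set.mem_setOf_eq] at hp hr
        exact Subtype.ext (Prod.ext h (hp.2.trans hr.2.symm))
      · intro T' hT'
        simp only [coe_filter, Set.mem_setOf_eq, mem_toLeft] at hT'
        obtain ⟨hT'S, heT'⟩ := hT'
        refine ⟨⟨(T', e), heT'⟩, ?_, rfl⟩
        have hfull := keyAfull T' hT'S
        have hin : (⟨(T', e), heT'⟩ : {p : {T // T ∈ Cc} × E // p.2 ∈ p.1.1})
            ∈ S'.toLeft.filter (fun p => p.1.1 = T') := by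
          rw [hfull]; simp
        simp only [coe_filter, Set.mem_setOf_eq]
        exact ⟨(mem_filter.1 hin).1, trivial⟩
    -- total counts of B and C parts
    have keyBtot : (S'.toRight.toLeft).card = (κ - 3) * S.toLeft.card := by
      rw [Finset.card_eq_sum_card_fiberwise
        (f := fun x => x.1) (t := univ) (fun x _ => mem_univ x.1)]
      rw [Finset.sum_congr rfl (fun T _ => keyBcard T)]
      have hcond : ∀ T : {T // T ∈ Cc},
          (if Sum.inl T ∈ S then κ - 3 else 0) = (if T ∈ S.toLeft then κ - 3 else 0) := by
        intro T; simp [mem_toLeft]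
      rw [Finset.sum_congr rfl (fun T _ => hcond T), Finset.sum_ite_mem, univ_inter,
        Finset.sum_const, smul_eq_mul, mul_comm]
    have keyCtot : (S'.toRight.toRight.toLeft).card = S.toRight.card := by
      rw [Finset.card_eq_sum_card_fiberwise
        (f := fun x => x) (t := univ) (fun x _ => mem_univ x)]
      rw [Finset.sum_congr rfl (fun e _ => keyCcard e)]
      have hcond : ∀ e : E,
          (if Sum.inr e ∈ S then 1 else 0) = (if e ∈ S.toRight then 1 else 0) := by
        intro e; simp [mem_toRight]
      rw [Finset.sum_congr rfl (fun e _ => hcond e), Finset.sum_ite_mem, univ_inter,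
        Finset.sum_const, smul_eq_mul, mul_one]
    -- balance equation gives |S.toRight| = 3 |S.toLeft|
    have hbal : S.toRight.card = 3 * S.toLeft.card := by
      have h := h2none
      rw [keyBtot, keyCtot] at h
      have h3 : (κ - 3) * S.toLeft.card + 3 * S.toLeft.card = κ * S.toLeft.card := by
        rw [← add_mul]
        congr 1
        omega
      omega
    have hcards : S.toLeft.card + S.toRight.card = S.card := card_toLeft_add_card_toRight
    have hble : S.toRight.card ≤ 3 * q := by
      calc S.toRight.card ≤ Fintype.card E := Finset.card_le_univ _
        _ = 3 * q := hE
    have hbeq : S.toRight.card = 3 * q := by omega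
    have hSr : S.toRight = univ := Finset.eq_univ_of_card _ (by rw [hbeq, hE])
    have hall : ∀ e : E, Sum.inr e ∈ S := by
      intro e
      rw [← mem_toRight, hSr]
      exact mem_univ e
    have huniq : ∀ e : E, (S.toLeft.filter (fun T => e ∈ T.1)).card = 1 := by
      intro e
      rw [← key2, keyAe, if_pos (hall e)]
    refine ⟨S.toLeft.image Subtype.val, ?_, ?_⟩
    · intro T hT
      obtain ⟨T', _, rfl⟩ := mem_image.1 hT
      exact T'.2
    · intro e
      obtain ⟨T₀, hT₀⟩ := Finset.card_eq_one.1 (huniq e)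
      have hmem : T₀ ∈ S.toLeft ∧ e ∈ T₀.1 := by
        have := hT₀ ▸ Finset.mem_singleton_self T₀
        exact mem_filter.1 this
      refine ⟨T₀.1, ⟨mem_image_of_mem _ hmem.1, hmem.2⟩, ?_⟩
      rintro T ⟨hTmem, heT⟩
      obtain ⟨T₁, hT₁, rfl⟩ := mem_image.1 hTmem
      have : T₁ ∈ S.toLeft.filter (fun T => e ∈ T.1) := mem_filter.2 ⟨hT₁, heT⟩
      rw [hT₀, mem_singleton] at this
      rw [this]
  · rintro ⟨C', hsub, hcover⟩
    -- cardinality of the cover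
    have hunion : C'.biUnion id = univ := by
      apply Finset.eq_univ_of_forall
      intro e
      obtain ⟨T, ⟨hTC, heT⟩, -⟩ := hcover e
      exact Finset.mem_biUnion.2 ⟨T, hTC, heT⟩
    have hdisj : ∀ T₁ ∈ C', ∀ T₂ ∈ C', T₁ ≠ T₂ → Disjoint (id T₁) (id T₂) := by
      intro T₁ h₁ T₂ h₂ hne
      rw [Finset.disjoint_left]
      intro e he₁ he₂
      obtain ⟨T, -, huT⟩ := hcover e
      exact hne ((huT T₁ ⟨h₁, he₁⟩).trans (huT T₂ ⟨h₂, he₂⟩).symm)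
    have hq : C'.card = q := by
      have h1 : (C'.biUnion id).card = ∑ T ∈ C', (id T).card := Finset.card_biUnion hdisj
      rw [hunion, card_univ, hE] at h1
      have h2 : ∑ T ∈ C', (id T).card = 3 * C'.card := by
        calc ∑ T ∈ C', (id T).card = ∑ _T ∈ C', 3 :=
              Finset.sum_congr rfl (fun T hT => hCc T (hsub hT))
          _ = 3 * C'.card := by rw [Finset.sum_const, smul_eq_mul, mul_comm]
      omega
    set Sc : Finset {T // T ∈ Cc} := univ.filter (fun T => T.1 ∈ C') with hScdef
    have hScq : Sc.card = q := by
      rw [← hq]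
      apply Finset.card_nbij (i := Subtype.val)
      · intro T hT
        simp only [hScdef, mem_coe, mem_filter] at hT
        simpa using hT.2
      · intro T _ T' _ h
        exact Subtype.ext h
      · intro T hT
        have hT' : T ∈ C' := Finset.mem_coe.1 hT
        refine ⟨⟨T, hsub hT'⟩, ?_, rfl⟩
        simp [hScdef, hT']
    refine ⟨Sc.disjSum univ,
      ((univ : Finset {p : {T // T ∈ Cc} × E // p.2 ∈ p.1.1}).filter
          (fun p => p.1.1.1 ∈ C')).disjSum
        (((univ : Finset ({T // T ∈ Cc} × Fin (κ - 3))).filter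
            (fun x => x.1.1 ∈ C')).disjSum
          ((univ : Finset E).disjSum (univ : Finset (E × Fin (κ - 1))))), ?_, ?_, ?_⟩
    · rintro (T | e)
      · -- covariate 1, level inl T
        rw [filter_sum_card, filter_sum_card, filter_sum_card, filter_sum_card]
        simp only [toLeft_disjSum, toRight_disjSum, x3cLevT1_eq, x3cLevC1_inl,
          x3cLevC1_inrl, x3cLevC1_inrrl, x3cLevC1_inrrr, Sum.inl.injEq, reduceCtorEq,
          filter_false, card_empty, add_zero, zero_add]
        by_cases hT : T.1 ∈ C'
        · have hSce : T ∈ Sc := by simp [hScdef, hT]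
          have e1 : (Sc.filter (fun a => a = T)).card = 1 := by
            rw [card_filter_eq_ite, if_pos hSce]
          have e2 : (univ.filter (fun x : E => False)).card = 0 := by simp
          have eA : ((univ : Finset {p : {T // T ∈ Cc} × E // p.2 ∈ p.1.1}).filter
              (fun p => p.1.1.1 ∈ C')).filter (fun p => p.1.1 = T)
              = (univ : Finset {p : {T // T ∈ Cc} × E // p.2 ∈ p.1.1}).filter
                (fun p => p.1.1 = T) := by
            ext p
            simp only [mem_filter, mem_univ, true_and, and_iff_right_iff_imp]
            intro h; rw [h]; exact hT
          have eB : ((univ : Finset ({T // T ∈ Cc} × Fin (κ - 3))).filter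
              (fun x => x.1.1 ∈ C')).filter (fun x => x.1 = T)
              = (univ : Finset ({T // T ∈ Cc} × Fin (κ - 3))).filter (fun x => x.1 = T) := by
            ext x
            simp only [mem_filter, mem_univ, true_and, and_iff_right_iff_imp]
            intro h; rw [h]; exact hT
          rw [e1, eA, eB, hA3 T, fst_fiber_card]
          simp only [Fintype.card_fin]
          omega
        · have hSce : T ∉ Sc := by simp [hScdef, hT]
          have e1 : (Sc.filter (fun a => a = T)).card = 0 := by
            rw [card_filter_eq_ite, if_neg hSce]
          have eA : (((univ : Finset {p : {T // T ∈ Cc} × E // p.2 ∈ p.1.1}).filter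
              (fun p => p.1.1.1 ∈ C')).filter (fun p => p.1.1 = T)) = ∅ := by
            rw [Finset.filter_filter, Finset.filter_eq_empty_iff]
            rintro p - ⟨h1, h2⟩
            rw [h2] at h1
            exact hT h1
          have eB : (((univ : Finset ({T // T ∈ Cc} × Fin (κ - 3))).filter
              (fun x => x.1.1 ∈ C')).filter (fun x => x.1 = T)) = ∅ := by
            rw [Finset.filter_filter, Finset.filter_eq_empty_iff]
            rintro x - ⟨h1, h2⟩
            rw [h2] at h1
            exact hT h1
          rw [e1, eA, eB]
          simp
      · -- covariate 1, level inr e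
        rw [filter_sum_card, filter_sum_card, filter_sum_card, filter_sum_card]
        simp only [toLeft_disjSum, toRight_disjSum, x3cLevT1_eq, x3cLevC1_inl,
          x3cLevC1_inrl, x3cLevC1_inrrl, x3cLevC1_inrrr, Sum.inr.injEq, reduceCtorEq,
          filter_false, card_empty, add_zero, zero_add]
        rw [fst_fiber_card, card_filter_eq_ite, if_pos (mem_univ e)]
        simp only [Fintype.card_fin]
        omega
    · rintro (_ | e)
      · -- covariate 2, level none
        rw [filter_sum_card, filter_sum_card, filter_sum_card, filter_sum_card]
        simp only [toLeft_disjSum, toRight_disjSum, x3cLevT2_inl, x3cLevT2_inr,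
          x3cLevC2_inl, x3cLevC2_inrl, x3cLevC2_inrrl, x3cLevC2_inrrr, reduceCtorEq,
          filter_false, card_empty, add_zero, zero_add, filter_true]
        have eB : ((univ : Finset ({T // T ∈ Cc} × Fin (κ - 3))).filter
            (fun x => x.1.1 ∈ C')).card = q * (κ - 3) := by
          rw [show (univ : Finset ({T // T ∈ Cc} × Fin (κ - 3))).filter
              (fun x => x.1.1 ∈ C') = Sc ×ˢ univ by
            ext x; simp [hScdef]]
          rw [Finset.card_product, hScq, card_univ, Fintype.card_fin]
        rw [eB, hScq, card_univ, hE]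
        have h3 : q * (κ - 3) + 3 * q = κ * q := by
          rw [mul_comm q (κ - 3), ← add_mul]
          congr 1
          omega
        omega
      · -- covariate 2, level some e
        rw [filter_sum_card, filter_sum_card, filter_sum_card, filter_sum_card]
        simp only [toLeft_disjSum, toRight_disjSum, x3cLevT2_inl, x3cLevT2_inr,
          x3cLevC2_inl, x3cLevC2_inrl, x3cLevC2_inrrl, x3cLevC2_inrrr, reduceCtorEq,
          filter_false, card_empty, add_zero, zero_add, Option.some.injEq]
        obtain ⟨T₀, ⟨hT₀C, heT₀⟩, huT⟩ := hcover e
        have eA : (((univ : Finset {p : {T // T ∈ Cc} × E // p.2 ∈ p.1.1}).filter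
            (fun p => p.1.1.1 ∈ C')).filter (fun p => p.1.2 = e))
            = {⟨(⟨T₀, hsub hT₀C⟩, e), heT₀⟩} := by
          rw [Finset.filter_filter]
          ext p
          simp only [mem_filter, mem_univ, true_and, mem_singleton]
          constructor
          · rintro ⟨h1, h2⟩
            have hp2 : e ∈ p.1.1.1 := by rw [← h2]; exact p.2
            have hTeq : p.1.1.1 = T₀ := huT p.1.1.1 ⟨h1, hp2⟩
            exact Subtype.ext (Prod.ext (Subtype.ext hTeq) h2)
          · rintro rfl
            exact ⟨hT₀C, rfl⟩
        rw [eA, card_filter_eq_ite, if_pos (mem_univ e), fst_fiber_card]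
        simp only [Fintype.card_fin, card_singleton]
        omega
    · rw [card_disjSum, hScq, card_univ, hE]
      omega
end

section
/- In the variable gadget of the 3-SAT reduction to the 2-covariate balanced matching problem, there are exactly two zero-distance perfect matchings: either e_i is matched to a_i for i = 0,...,q_j−1 and f_i to d_i for i = 1,...,p_j−1 (leaving all b_i and c_i unmatched), or f_i is matched to c_i for i = 0,...,p_j−1 and e_i to b_i for i = 1,...,q_j−1 (leaving all a_i and d_i unmatched), given the constraint that exactly one control sample is matched from each of the pairs {a_i, b_{i+1}} (i = 0,...,q_j−2), {c_i, d_{i+1}} (i = 0,...,p_j−2), and {a_{q_j−1}, c_{p_j−1}}. -/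
open Finset

def gadgetZero {qq pp : ℕ} :
    (Fin (qq + 1) ⊕ Fin pp) →
    (Fin (qq + 1) ⊕ (Fin qq ⊕ (Fin (pp + 1) ⊕ Fin pp))) → Prop
  | Sum.inl i, Sum.inl i' => i = i'                                  -- eᵢ – aᵢ
  | Sum.inl i, Sum.inr (Sum.inl w) => i = w.succ                     -- e_{w+1} – b_{w+1}
  | Sum.inl i, Sum.inr (Sum.inr (Sum.inl j)) => i = 0 ∧ j = 0        -- e₀ = f₀ – c₀
  | Sum.inr w, Sum.inr (Sum.inr (Sum.inl j)) => j = w.succ           -- f_{w+1} – c_{w+1}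
  | Sum.inr w, Sum.inr (Sum.inr (Sum.inr w')) => w = w'              -- f_{w+1} – d_{w+1}
  | _, _ => False

/-- In the variable gadget of the 3-SAT reduction there are exactly two
zero-distance matchings: either every `eᵢ` is matched to `aᵢ` and every `f_{w+1}` to
`d_{w+1}`, or `e₀ = f₀` is matched to `c₀`, every `f_{w+1}` to `c_{w+1}` and every
`e_{w+1}` to `b_{w+1}`. -/
theorem stmt_11 (qq pp : ℕ)
    (m : (Fin (qq + 1) ⊕ Fin pp) →
         (Fin (qq + 1) ⊕ (Fin qq ⊕ (Fin (pp + 1) ⊕ Fin pp))))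
    (hinj : Function.Injective m)
    (hzero : ∀ t, gadgetZero t (m t))
    (hab : ∀ w : Fin qq,
      Xor' (∃ t, m t = Sum.inl w.castSucc) (∃ t, m t = Sum.inr (Sum.inl w)))
    (hcd : ∀ w : Fin pp,
      Xor' (∃ t, m t = Sum.inr (Sum.inr (Sum.inl w.castSucc)))
           (∃ t, m t = Sum.inr (Sum.inr (Sum.inr w))))
    (hac : Xor' (∃ t, m t = Sum.inl (Fin.last qq))
                (∃ t, m t = Sum.inr (Sum.inr (Sum.inl (Fin.last pp))))) :
    ((∀ i : Fin (qq + 1), m (Sum.inl i) = Sum.inl i) ∧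
     (∀ w : Fin pp, m (Sum.inr w) = Sum.inr (Sum.inr (Sum.inr w)))) ∨
    (m (Sum.inl 0) = Sum.inr (Sum.inr (Sum.inl 0)) ∧
     (∀ w : Fin qq, m (Sum.inl w.succ) = Sum.inr (Sum.inl w)) ∧
     (∀ w : Fin pp, m (Sum.inr w) = Sum.inr (Sum.inr (Sum.inl w.succ)))) := by
  -- possible destinations of e_i
  have he : ∀ i : Fin (qq+1),
      m (Sum.inl i) = Sum.inl i ∨
      (∃ w : Fin qq, i = w.succ ∧ m (Sum.inl i) = Sum.inr (Sum.inl w)) ∨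
      (i = 0 ∧ m (Sum.inl i) = Sum.inr (Sum.inr (Sum.inl 0))) := by
    intro i
    have h := hzero (Sum.inl i)
    rcases hm : m (Sum.inl i) with i' | (w | (j | w'))
    · rw [hm] at h
      have h' : i = i' := h
      left; rw [h']
    · rw [hm] at h
      have h' : i = w.succ := h
      right; left; exact ⟨w, h', rfl⟩
    · rw [hm] at h
      have h' : i = 0 ∧ j = 0 := h
      right; right; exact ⟨h'.1, by rw [h'.2]⟩
    · rw [hm] at h
      exact (h : False).elim
  -- possible destinations of f_{w+1}
  have hf : ∀ w : Fin pp,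
      m (Sum.inr w) = Sum.inr (Sum.inr (Sum.inl w.succ)) ∨
      m (Sum.inr w) = Sum.inr (Sum.inr (Sum.inr w)) := by
    intro w
    have h := hzero (Sum.inr w)
    rcases hm : m (Sum.inr w) with i' | (w2 | (j | w'))
    · rw [hm] at h; exact (h : False).elim
    · rw [hm] at h; exact (h : False).elim
    · rw [hm] at h
      have h' : j = w.succ := h
      left; rw [h']
    · rw [hm] at h
      have h' : w = w' := h
      right; rw [h']
  rcases he 0 with h0 | ⟨w, hw, _⟩ | ⟨_, h0⟩
  · -- Case A : e₀ ↦ a₀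
    left
    have hA : ∀ n : ℕ, ∀ i : Fin (qq+1), i.val ≤ n → m (Sum.inl i) = Sum.inl i := by
      intro n
      induction n with
      | zero =>
        intro i hi
        have : i = 0 := Fin.ext (by simp only [Fin.val_zero]; omega)
        rw [this]; exact h0
      | succ n ih =>
        intro i hi
        rcases Nat.lt_or_ge i.val (n+1) with h | h
        · exact ih i (Nat.lt_succ_iff.mp h)
        · have hiv : i.val = n + 1 := le_antisymm hi h
          rcases he i with h1 | ⟨w, hw, h2⟩ | ⟨h3, _⟩
          · exact h1
          · exfalso
            have hwv : (w : ℕ) = n := by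
              have := congrArg Fin.val hw
              simp [Fin.val_succ, hiv] at this; omega
            have ha : m (Sum.inl w.castSucc) = Sum.inl w.castSucc :=
              ih w.castSucc (by simp [Fin.coe_castSucc, hwv])
            rcases hab w with ⟨_, hnb⟩ | ⟨_, hna⟩
            · exact hnb ⟨Sum.inl i, h2⟩
            · exact hna ⟨Sum.inl w.castSucc, ha⟩
          · exfalso
            have := congrArg Fin.val h3
            simp [hiv] at this
    have heA : ∀ i : Fin (qq+1), m (Sum.inl i) = Sum.inl i := fun i => hA i.val i le_rfl
    refine ⟨heA, ?_⟩
    have hnc : ¬ ∃ t, m t = Sum.inr (Sum.inr (Sum.inl (Fin.last pp))) := by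
      rcases hac with ⟨_, hnc⟩ | ⟨_, hna⟩
      · exact hnc
      · exact absurd ⟨Sum.inl (Fin.last qq), heA _⟩ hna
    have hF : ∀ n : ℕ, ∀ w : Fin pp, pp - 1 - w.val ≤ n →
        m (Sum.inr w) = Sum.inr (Sum.inr (Sum.inr w)) := by
      intro n
      induction n with
      | zero =>
        intro w hw
        have hwv : (w : ℕ) = pp - 1 := by have := w.isLt; omega
        rcases hf w with hc | hd
        · exfalso
          apply hnc
          refine ⟨Sum.inr w, ?_⟩
          rw [hc]
          have : w.succ = Fin.last pp := Fin.ext (by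
            simp only [Fin.val_succ, Fin.val_last, hwv]
            have := w.isLt; omega)
          rw [this]
        · exact hd
      | succ n ih =>
        intro w hw
        rcases le_or_gt (pp - 1 - w.val) n with h | h
        · exact ih w h
        · have hlt : (w : ℕ) + 1 < pp := by have := w.isLt; omega
          set w' : Fin pp := ⟨w.val + 1, hlt⟩ with hw'
          have hd' : m (Sum.inr w') = Sum.inr (Sum.inr (Sum.inr w')) :=
            ih w' (by simp [hw']; omega)
          rcases hcd w' with ⟨_, hnd⟩ | ⟨_, hncast⟩
          · exact absurd ⟨Sum.inr w', hd'⟩ hnd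
          · rcases hf w with hc | hd
            · exfalso
              apply hncast
              refine ⟨Sum.inr w, ?_⟩
              rw [hc]
              have : w.succ = Fin.castSucc w' := Fin.ext (by simp [hw'])
              rw [this]
            · exact hd
    exact fun w => hF (pp - 1 - w.val) w le_rfl
  · -- impossible: 0 = w.succ
    exact absurd (congrArg Fin.val hw) (by simp)
  · -- Case B : e₀ ↦ c₀
    right
    -- f-chain upward: every f_{w+1} ↦ c_{w+1}
    have hFB : ∀ n : ℕ, ∀ w : Fin pp, w.val ≤ n →
        m (Sum.inr w) = Sum.inr (Sum.inr (Sum.inl w.succ)) := by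
      intro n
      induction n with
      | zero =>
        intro w hw
        have hwv : (w : ℕ) = 0 := Nat.le_zero.mp hw
        have hc0 : ∃ t, m t = Sum.inr (Sum.inr (Sum.inl w.castSucc)) := by
          refine ⟨Sum.inl 0, ?_⟩
          rw [h0]
          have : (Fin.castSucc w) = (0 : Fin (pp+1)) :=
            Fin.ext (by simp [Fin.coe_castSucc, hwv])
          rw [this]
        rcases hcd w with ⟨_, hnd⟩ | ⟨_, hnc⟩
        · rcases hf w with hc | hd
          · exact hc
          · exact absurd ⟨Sum.inr w, hd⟩ hnd
        · exact absurd hc0 hnc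
      | succ n ih =>
        intro w hw
        rcases le_or_gt w.val n with h | h
        · exact ih w h
        · have hwv : (w : ℕ) = n + 1 := le_antisymm hw h
          have hlt : n < pp := by have := w.isLt; omega
          set w' : Fin pp := ⟨n, hlt⟩ with hw'
          have hc' : m (Sum.inr w') = Sum.inr (Sum.inr (Sum.inl w'.succ)) :=
            ih w' (by simp [hw'])
          have hcmatch : ∃ t, m t = Sum.inr (Sum.inr (Sum.inl w.castSucc)) := by
            refine ⟨Sum.inr w', ?_⟩
            rw [hc']
            have : w'.succ = Fin.castSucc w := Fin.ext (by simp [hw', hwv])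
            rw [this]
          rcases hcd w with ⟨_, hnd⟩ | ⟨_, hnc⟩
          · rcases hf w with hc | hd
            · exact hc
            · exact absurd ⟨Sum.inr w, hd⟩ hnd
          · exact absurd hcmatch hnc
    have hfB : ∀ w : Fin pp, m (Sum.inr w) = Sum.inr (Sum.inr (Sum.inl w.succ)) :=
      fun w => hFB w.val w le_rfl
    -- c_last is matched
    have hclast : ∃ t, m t = Sum.inr (Sum.inr (Sum.inl (Fin.last pp))) := by
      rcases Nat.eq_zero_or_pos pp with hpp | hpp
      · refine ⟨Sum.inl 0, ?_⟩
        rw [h0]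
        have : (Fin.last pp) = (0 : Fin (pp+1)) := Fin.ext (by simp [Fin.val_last, hpp])
        rw [this]
      · have hlt : pp - 1 < pp := by omega
        refine ⟨Sum.inr ⟨pp - 1, hlt⟩, ?_⟩
        rw [hfB ⟨pp - 1, hlt⟩]
        have : (⟨pp - 1, hlt⟩ : Fin pp).succ = Fin.last pp :=
          Fin.ext (by simp [Fin.val_succ, Fin.val_last]; omega)
        rw [this]
    have hna : ¬ ∃ t, m t = Sum.inl (Fin.last qq) := by
      rcases hac with ⟨_, hnc⟩ | ⟨_, hna⟩
      · exact absurd hclast hnc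
      · exact hna
    -- e-chain downward: every e_{w+1} ↦ b_{w+1}
    have hEB : ∀ n : ℕ, ∀ w : Fin qq, qq - 1 - w.val ≤ n →
        m (Sum.inl w.succ) = Sum.inr (Sum.inl w) := by
      intro n
      induction n with
      | zero =>
        intro w hw
        have hwv : (w : ℕ) = qq - 1 := by have := w.isLt; omega
        rcases he w.succ with h1 | ⟨w2, hw2, h2⟩ | ⟨h3, _⟩
        · exfalso
          apply hna
          refine ⟨Sum.inl w.succ, ?_⟩
          rw [h1]
          have : w.succ = Fin.last qq := Fin.ext (by
            simp only [Fin.val_succ, Fin.val_last, hwv]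
            have := w.isLt; omega)
          rw [this]
        · have : w2 = w := by
            have := congrArg Fin.val hw2
            exact Fin.ext (by simp [Fin.val_succ] at this; omega)
          rw [this] at h2; exact h2
        · exfalso
          have := congrArg Fin.val h3
          simp [Fin.val_succ] at this
      | succ n ih =>
        intro w hw
        rcases le_or_gt (qq - 1 - w.val) n with h | h
        · exact ih w h
        · have hlt : (w : ℕ) + 1 < qq := by have := w.isLt; omega
          set w' : Fin qq := ⟨w.val + 1, hlt⟩ with hw'
          have hb' : m (Sum.inl w'.succ) = Sum.inr (Sum.inl w') :=
            ih w' (by simp [hw']; omega)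
          have hnacast : ¬ ∃ t, m t = Sum.inl w'.castSucc := by
            rcases hab w' with ⟨_, hnb⟩ | ⟨_, hna'⟩
            · exact absurd ⟨Sum.inl w'.succ, hb'⟩ hnb
            · exact hna'
          rcases he w.succ with h1 | ⟨w2, hw2, h2⟩ | ⟨h3, _⟩
          · exfalso
            apply hnacast
            refine ⟨Sum.inl w.succ, ?_⟩
            rw [h1]
            have : w.succ = Fin.castSucc w' := Fin.ext (by simp [hw'])
            rw [this]
          · have : w2 = w := by
              have := congrArg Fin.val hw2
              exact Fin.ext (by simp [Fin.val_succ] at this; omega)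
            rw [this] at h2; exact h2
          · exfalso
            have := congrArg Fin.val h3
            simp [Fin.val_succ] at this
    exact ⟨h0, fun w => hEB (qq - 1 - w.val) w le_rfl, hfB⟩
end

section
/- The Exact-3-cover problem reduces to the 1-covariate (single-level) κ-MSBM problem for κ ≥ 3: construct one treatment sample per triplet T ∈ C, one control sample per element e ∈ E, and (κ−3)·q dummy control samples; the distance from the treatment sample of triplet T to a control sample is 0 if the control sample is a dummy or an element of T, and 1 otherwise. Then there exists a selection of q treatment samples and an assignment of each selected treatment sample to κ distinct control samples covering all |E| + (κ−3)q control samples with total distance 0, if and only if there is a subcollection C' ⊆ C with |C'| = q such that each element of E appears in exactly one triplet of C'. -/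
open Finset

/-- Fiber of `Prod.snd` over a fixed point is equivalent to the first factor. -/
def sndFiberEquiv {α β : Type*} [DecidableEq β] (j : β) :
    {p : α × β // p.2 = j} ≃ α where
  toFun p := p.1.1
  invFun a := ⟨(a, j), rfl⟩
  left_inv := by rintro ⟨⟨a, b⟩, rfl⟩; rfl
  right_inv a := rfl

/-- Exact-3-cover reduces to the single-level 1-covariate κ-MSBM problem
(κ ≥ 3).  Treatment samples are the triplets of `C`, control samples are the elements of
`E` together with `(κ-3)·q` dummies; a matching is modeled by `f` sending each control
sample to the selected treatment sample it is matched with; zero total distance means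
each element control sample is matched to a triplet containing it. -/
theorem stmt_12 {E : Type*} [Fintype E] [DecidableEq E] (q : ℕ)
    (hE : Fintype.card E = 3 * q)
    (Cc : Finset (Finset E)) (hCc : ∀ T ∈ Cc, T.card = 3)
    (κ : ℕ) (hκ : 3 ≤ κ) :
    (∃ (S : Finset {T // T ∈ Cc})
       (f : (E ⊕ Fin ((κ - 3) * q)) → {T // T ∈ Cc}),
       S.card = q ∧
       (∀ c, f c ∈ S) ∧
       (∀ s ∈ S, (Finset.univ.filter (fun c : E ⊕ Fin ((κ - 3) * q) => f c = s)).card = κ) ∧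
       (∀ e : E, e ∈ (f (Sum.inl e)).1))
    ↔ ∃ C' ⊆ Cc, C'.card = q ∧ ∀ e : E, ∃! T, T ∈ C' ∧ e ∈ T := by
  constructor
  · rintro ⟨S, f, hSq, hfS, -, hcov⟩
    refine ⟨S.image (fun s => s.1), ?_, ?_, ?_⟩
    · intro T hT
      simp only [Finset.mem_image] at hT
      obtain ⟨s, -, rfl⟩ := hT
      exact s.2
    · rw [Finset.card_image_of_injective _ Subtype.val_injective, hSq]
    · -- fibers of e ↦ f (Sum.inl e) over S partition E, each fiber ⊆ s.1
      have hpart : (Finset.univ : Finset E).card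
          = ∑ s ∈ S, ((Finset.univ : Finset E).filter (fun e => f (Sum.inl e) = s)).card :=
        Finset.card_eq_sum_card_fiberwise (fun e _ => hfS (Sum.inl e))
      have hsub : ∀ s ∈ S,
          ((Finset.univ : Finset E).filter (fun e => f (Sum.inl e) = s)) ⊆ s.1 := by
        intro s hs e he
        simp only [Finset.mem_filter] at he
        have := hcov e
        rw [he.2] at this
        exact this
      have hle : ∀ s ∈ S,
          ((Finset.univ : Finset E).filter (fun e => f (Sum.inl e) = s)).card ≤ 3 := by
        intro s hs
        have := Finset.card_le_card (hsub s hs)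
        rwa [hCc s.1 s.2] at this
      have hsum3 : ∑ s ∈ S, ((Finset.univ : Finset E).filter
          (fun e => f (Sum.inl e) = s)).card = ∑ _s ∈ S, 3 := by
        rw [← hpart, Finset.card_univ, hE, Finset.sum_const, hSq, smul_eq_mul, mul_comm]
      have heq3 : ∀ s ∈ S,
          ((Finset.univ : Finset E).filter (fun e => f (Sum.inl e) = s)).card = 3 := by
        by_contra hcon
        push_neg at hcon
        obtain ⟨s, hs, hne⟩ := hcon
        have hlt : ∑ s ∈ S, ((Finset.univ : Finset E).filter
            (fun e => f (Sum.inl e) = s)).card < ∑ _s ∈ S, 3 :=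
          Finset.sum_lt_sum hle ⟨s, hs, lt_of_le_of_ne (hle s hs) hne⟩
        omega
      have hfib_eq : ∀ s ∈ S,
          ((Finset.univ : Finset E).filter (fun e => f (Sum.inl e) = s)) = s.1 := by
        intro s hs
        apply Finset.eq_of_subset_of_card_le (hsub s hs)
        rw [hCc s.1 s.2, heq3 s hs]
      intro e
      refine ⟨(f (Sum.inl e)).1, ⟨Finset.mem_image_of_mem _ (hfS (Sum.inl e)), hcov e⟩, ?_⟩
      rintro T ⟨hT, heT⟩
      simp only [Finset.mem_image] at hT
      obtain ⟨s, hs, rfl⟩ := hT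
      have : e ∈ (Finset.univ : Finset E).filter (fun e => f (Sum.inl e) = s) := by
        rw [hfib_eq s hs]; exact heT
      simp only [Finset.mem_filter] at this
      rw [this.2]
  · rintro ⟨C', hC'sub, hC'q, hcov⟩
    -- treatment selection
    set S : Finset {T // T ∈ Cc} :=
      C'.attach.map ⟨fun T => ⟨T.1, hC'sub T.2⟩,
        by intro a b hab; simp only [Subtype.mk.injEq] at hab; exact Subtype.ext hab⟩ with hSdef
    have hSq : S.card = q := by rw [hSdef, Finset.card_map, Finset.card_attach, hC'q]
    have hmemS : ∀ (s : {T // T ∈ Cc}), s ∈ S ↔ s.1 ∈ C' := by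
      intro s
      simp only [hSdef, Finset.mem_map, Finset.mem_attach, Function.Embedding.coeFn_mk,
        true_and]
      constructor
      · rintro ⟨a, ha⟩; rw [← ha]; exact a.2
      · intro h; exact ⟨⟨s.1, h⟩, Subtype.ext rfl⟩
    -- element assignment
    have g0 : ∀ e : E, ∃ T, T ∈ C' ∧ e ∈ T := fun e => (hcov e).exists
    let g : E → {T // T ∈ Cc} := fun e => ⟨(g0 e).choose, hC'sub (g0 e).choose_spec.1⟩
    have hg_mem : ∀ e, (g e).1 ∈ C' := fun e => (g0 e).choose_spec.1
    have hg_cov : ∀ e, e ∈ (g e).1 := fun e => (g0 e).choose_spec.2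
    have hg_uniq : ∀ (e : E) (s : {T // T ∈ Cc}), s.1 ∈ C' → e ∈ s.1 → g e = s := by
      intro e s hs hes
      apply Subtype.ext
      exact ((hcov e).unique ⟨hg_mem e, hg_cov e⟩ ⟨hs, hes⟩)
    -- dummy assignment
    have eS : {x // x ∈ S} ≃ Fin q := S.equivFinOfCardEq hSq
    let d : Fin ((κ - 3) * q) → {T // T ∈ Cc} :=
      fun i => (eS.symm (finProdFinEquiv.symm i).2).1
    have hd_mem : ∀ i, d i ∈ S := fun i => (eS.symm (finProdFinEquiv.symm i).2).2
    refine ⟨S, Sum.elim g d, hSq, ?_, ?_, ?_⟩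
    · rintro (e | i)
      · exact (hmemS (g e)).2 (hg_mem e)
      · exact hd_mem i
    · intro s hs
      -- count the fiber
      rw [← Fintype.card_subtype]
      rw [Fintype.card_congr (Equiv.subtypeSum
        (p := fun c : E ⊕ Fin ((κ - 3) * q) => Sum.elim g d c = s)), Fintype.card_sum]
      have h1 : Fintype.card {a : E // Sum.elim g d (Sum.inl a) = s} = 3 := by
        rw [Fintype.card_subtype]
        have : (Finset.univ.filter fun a : E => Sum.elim g d (Sum.inl a) = s) = s.1 := by
          ext e
          simp only [Finset.mem_filter, Finset.mem_univ, true_and]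
          simp only [Sum.elim_inl]
          constructor
          · rintro rfl; exact hg_cov e
          · intro he; exact hg_uniq e s ((hmemS s).1 hs) he
        rw [this, hCc s.1 s.2]
      have h2 : Fintype.card {i : Fin ((κ - 3) * q) // Sum.elim g d (Sum.inr i) = s} =
          κ - 3 := by
        have key : ∀ i : Fin ((κ - 3) * q),
            Sum.elim g d (Sum.inr i) = s ↔ (finProdFinEquiv.symm i).2 = eS ⟨s, hs⟩ := by
          intro i
          simp only [Sum.elim_inr, d]
          constructor
          · intro h
            have : eS.symm (finProdFinEquiv.symm i).2 = ⟨s, hs⟩ :=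
              Subtype.ext h
            rw [← this, Equiv.apply_symm_apply]
          · intro h
            rw [h, Equiv.symm_apply_apply]
        calc Fintype.card {i : Fin ((κ - 3) * q) // Sum.elim g d (Sum.inr i) = s}
            = Fintype.card {i : Fin ((κ - 3) * q) //
                (finProdFinEquiv.symm i).2 = eS ⟨s, hs⟩} := by
              exact Fintype.card_congr (Equiv.subtypeEquiv (Equiv.refl _)
                (fun i => by simpa using key i))
          _ = Fintype.card {p : Fin (κ - 3) × Fin q // p.2 = eS ⟨s, hs⟩} := by
              exact Fintype.card_congr (finProdFinEquiv.symm.subtypeEquiv (fun i => Iff.rfl))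
          _ = Fintype.card (Fin (κ - 3)) := Fintype.card_congr (sndFiberEquiv _)
          _ = κ - 3 := Fintype.card_fin _
      rw [h1, h2]
      omega
    · intro e
      exact hg_cov e
end

section
/- In the Exact-3-cover reduction to single-level κ-MSBM (κ ≥ 3), any zero-distance solution matches every selected treatment sample to exactly κ−3 dummy control samples and exactly 3 element control samples: if q treatment samples are each matched to κ distinct control samples, all |E| + (κ−3)q control samples are matched, and every matched pair has distance 0, then every selected treatment sample (triplet T) is matched to exactly the 3 control samples corresponding to the elements of T plus κ−3 dummy samples. -/
open Finset

/-- In the Exact-3-cover reduction to single-level κ-MSBM (κ ≥ 3), any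
zero-distance solution matches every selected treatment sample (a triplet `T`) to exactly
the 3 element control samples of `T` plus `κ - 3` dummy control samples. -/
theorem stmt_13 {E : Type*} [Fintype E] [DecidableEq E] (q : ℕ)
    (hE : Fintype.card E = 3 * q)
    (Cc : Finset (Finset E)) (hCc : ∀ T ∈ Cc, T.card = 3)
    (κ : ℕ) (hκ : 3 ≤ κ)
    (S : Finset {T // T ∈ Cc})
    (f : (E ⊕ Fin ((κ - 3) * q)) → {T // T ∈ Cc})
    (hScard : S.card = q)
    (hrange : ∀ c, f c ∈ S)
    (hcount : ∀ s ∈ S,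
      (Finset.univ.filter (fun c : E ⊕ Fin ((κ - 3) * q) => f c = s)).card = κ)
    (hzero : ∀ e : E, e ∈ (f (Sum.inl e)).1) :
    (∀ s ∈ S, ∀ e : E, f (Sum.inl e) = s ↔ e ∈ s.1) ∧
    (∀ s ∈ S,
      (Finset.univ.filter (fun d : Fin ((κ - 3) * q) => f (Sum.inr d) = s)).card
        = κ - 3) := by
  classical
  set A : {T // T ∈ Cc} → Finset E :=
    fun s => Finset.univ.filter (fun e : E => f (Sum.inl e) = s) with hA
  have hsub : ∀ s ∈ S, A s ⊆ s.1 := by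
    intro s _ e he
    simp only [hA, mem_filter] at he
    have := hzero e
    rwa [he.2] at this
  have hle : ∀ s ∈ S, (A s).card ≤ 3 := fun s hs =>
    le_trans (Finset.card_le_card (hsub s hs)) (le_of_eq (hCc s.1 s.2))
  have hsum : ∑ s ∈ S, (A s).card = 3 * q := by
    rw [← hE, ← Finset.card_univ]
    exact (Finset.card_eq_sum_card_fiberwise (fun e _ => hrange (Sum.inl e))).symm
  have hsum' : ∑ s ∈ S, (A s).card = ∑ s ∈ S, 3 := by
    rw [hsum, Finset.sum_const, hScard, smul_eq_mul, mul_comm]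
  have hcard3 : ∀ s ∈ S, (A s).card = 3 := by
    intro s hs
    by_contra hne
    have hlt : (A s).card < 3 := lt_of_le_of_ne (hle s hs) hne
    have : ∑ t ∈ S, (A t).card < ∑ t ∈ S, 3 :=
      Finset.sum_lt_sum (fun t ht => hle t ht) ⟨s, hs, hlt⟩
    omega
  have heq : ∀ s ∈ S, A s = s.1 := fun s hs =>
    Finset.eq_of_subset_of_card_le (hsub s hs)
      (by rw [hcard3 s hs, hCc s.1 s.2])
  have hiff : ∀ s ∈ S, ∀ e : E, f (Sum.inl e) = s ↔ e ∈ s.1 := by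
    intro s hs e
    rw [← heq s hs]
    simp [hA]
  refine ⟨hiff, ?_⟩
  intro s hs
  have hsplit : ((Finset.univ.filter
      (fun c : E ⊕ Fin ((κ - 3) * q) => f c = s)).toLeft).card +
      ((Finset.univ.filter
      (fun c : E ⊕ Fin ((κ - 3) * q) => f c = s)).toRight).card = κ := by
    rw [Finset.card_toLeft_add_card_toRight, hcount s hs]
  have hL : (Finset.univ.filter
      (fun c : E ⊕ Fin ((κ - 3) * q) => f c = s)).toLeft = A s := by
    ext e; simp [hA]
  have hR : (Finset.univ.filter
      (fun c : E ⊕ Fin ((κ - 3) * q) => f c = s)).toRight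
      = Finset.univ.filter (fun d : Fin ((κ - 3) * q) => f (Sum.inr d) = s) := by
    ext d; simp
  rw [hL, hR, hcard3 s hs] at hsplit
  omega
end

section
/- In the exact-matching-to-BM' reduction, zero-cost solutions correspond to exact matchings: given a bipartite graph G = (V_1 ∪ V_2, E_b ∪ E_r) with |V_1| = |V_2| = q and an integer k, construct the BM' instance with control nodes {v_r, v_b : v ∈ V_1}, treatment nodes V_2, zero distance exactly on pairs corresponding to original edges (blue edges attach to v_b, red to v_r), covariate-1 levels the pairs {v_r, v_b}, and covariate-2 levels blue/red with exactly k treatment nodes in the blue level. Then the BM' instance has a feasible matching of total distance 0 if and only if G has a perfect matching with exactly k blue edges. -/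
open Finset

/-- In the exact-matching-to-BM' reduction, zero-cost solutions correspond
to exact matchings: the BM' instance (control nodes `V₁ × Fin 2` with `(v,1)` the blue
copy and `(v,0)` the red copy; treatment nodes `V₂`; covariate 1 levels the pairs
`{v_r, v_b}`, covariate 2 levels blue/red with exactly `k` blue treatment nodes) has a
feasible matching of total distance 0 iff the bipartite graph has a perfect matching with
exactly `k` blue edges. -/
theorem stmt_18 {V1 V2 : Type*} [Fintype V1] [Fintype V2] [DecidableEq V1] [DecidableEq V2]
    (q k : ℕ) (h1 : Fintype.card V1 = q) (h2 : Fintype.card V2 = q)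
    (Eb Er : Finset (V1 × V2)) (hdisj : Disjoint Eb Er) :
    (∃ f : V2 → V1 × Fin 2,
      Function.Injective f ∧
      (∀ v : V1, ((Finset.univ : Finset V2).filter (fun u => (f u).1 = v)).card = 1) ∧
      ((Finset.univ : Finset V2).filter (fun u => (f u).2 = 1)).card = k ∧
      (∀ u : V2, ((f u).2 = 1 ∧ ((f u).1, u) ∈ Eb) ∨ ((f u).2 = 0 ∧ ((f u).1, u) ∈ Er)))
    ↔ (∃ g : V2 → V1,
      Function.Bijective g ∧
      (∀ u : V2, (g u, u) ∈ Eb ∪ Er) ∧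
      ((Finset.univ : Finset V2).filter (fun u => (g u, u) ∈ Eb)).card = k) := by
  constructor
  · rintro ⟨f, hinj, hfib, hcnt, hcase⟩
    refine ⟨fun u => (f u).1, ?_, ?_, ?_⟩
    · constructor
      · intro a b hab
        have h := hfib ((f a).1)
        rw [Finset.card_eq_one] at h
        obtain ⟨c, hc⟩ := h
        have ha : a ∈ Finset.univ.filter (fun u => (f u).1 = (f a).1) := by
          simp
        have hb : b ∈ Finset.univ.filter (fun u => (f u).1 = (f a).1) := by
          simp [hab]
        rw [hc, Finset.mem_singleton] at ha hb
        rw [ha, hb]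
      · intro v
        have h := hfib v
        rw [Finset.card_eq_one] at h
        obtain ⟨c, hc⟩ := h
        have : c ∈ Finset.univ.filter (fun u => (f u).1 = v) := by
          rw [hc]; exact Finset.mem_singleton_self c
        simp at this
        exact ⟨c, this⟩
    · intro u
      rcases hcase u with ⟨_, h⟩ | ⟨_, h⟩
      · exact Finset.mem_union_left _ h
      · exact Finset.mem_union_right _ h
    · rw [← hcnt]
      congr 1
      ext u
      simp only [Finset.mem_filter, Finset.mem_univ, true_and]
      constructor
      · intro hb
        rcases hcase u with ⟨h1', _⟩ | ⟨_, h2'⟩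
        · exact h1'
        · exact absurd h2' (Finset.disjoint_left.mp hdisj hb)
      · intro h1'
        rcases hcase u with ⟨_, hb⟩ | ⟨h0, _⟩
        · exact hb
        · rw [h0] at h1'; exact absurd h1' (by decide)
  · rintro ⟨g, hbij, hmem, hcnt⟩
    refine ⟨fun u => (g u, if (g u, u) ∈ Eb then 1 else 0), ?_, ?_, ?_, ?_⟩
    · intro a b hab
      exact hbij.1 (congrArg Prod.fst hab)
    · intro v
      rw [Finset.card_eq_one]
      obtain ⟨u, hu⟩ := hbij.2 v
      refine ⟨u, ?_⟩
      ext w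
      simp only [Finset.mem_filter, Finset.mem_univ, true_and, Finset.mem_singleton]
      constructor
      · intro hw; exact hbij.1 (hw.trans hu.symm)
      · rintro rfl; exact hu
    · rw [← hcnt]
      congr 1
      ext u
      simp only [Finset.mem_filter, Finset.mem_univ, true_and]
      by_cases h : (g u, u) ∈ Eb <;> simp [h]
    · intro u
      by_cases h : (g u, u) ∈ Eb
      · left; simp [h]
      · right
        have := hmem u
        rw [Finset.mem_union] at this
        simp [h, this.resolve_left h]
end

section
/- For the 1-covariate minimum κ-imbalance problem, the minimum of ∑_{i=1}^{k} | |S'∩L'_i| − κ·ℓ_i | over all selections S' ⊆ C with |S'| = κ·n equals ∑_{i=1}^{k} (κ·ℓ_i − min(κ·ℓ_i, ℓ'_i)) + max(0, κ·n − ∑_{i=1}^{k} min(κ·ℓ_i, ℓ'_i)) computed for the selection picking min(κ·ℓ_i, ℓ'_i) from each level and filling arbitrarily; in particular, when ∑_i min(κ·ℓ_i, ℓ'_i) = κ·n the minimum imbalance is ∑_{i=1}^k max(0, κ·ℓ_i − ℓ'_i). -/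
open Finset

private lemma aux19 {β : Type*} {k N : ℕ}
    (C : Finset β) (levC : β → Fin k) (t : Fin k → ℕ)
    (hT : ∑ i, t i = N) (hC : N ≤ C.card) :
    IsLeast {v : ℕ | ∃ S' ⊆ C, S'.card = N ∧
        ∑ i : Fin k, (((S'.filter (fun x => levC x = i)).card : ℤ) - (t i : ℤ)).natAbs = v}
      ((∑ i : Fin k, (t i - min (t i) ((C.filter (fun x => levC x = i)).card)))
        + (N - ∑ i : Fin k, min (t i) ((C.filter (fun x => levC x = i)).card))) := by
  classical
  have hsum_fiber : ∀ S' : Finset β,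
      ∑ i : Fin k, (S'.filter (fun x => levC x = i)).card = S'.card := fun S' =>
    (Finset.card_eq_sum_card_fiberwise (fun x _ => Finset.mem_univ (levC x))).symm
  have hMle : ∑ i : Fin k, min (t i) ((C.filter (fun x => levC x = i)).card) ≤ N := by
    rw [← hT]
    exact Finset.sum_le_sum fun i _ => min_le_left _ _
  have hA : ∑ i : Fin k, (t i - min (t i) ((C.filter (fun x => levC x = i)).card))
      + ∑ i : Fin k, min (t i) ((C.filter (fun x => levC x = i)).card) = N := by
    rw [← Finset.sum_add_distrib, ← hT]
    exact Finset.sum_congr rfl fun i _ => Nat.sub_add_cancel (min_le_left _ _)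
  have key : ∀ a b : ℕ, ((((a : ℤ) - (b : ℤ)).natAbs : ℕ) : ℤ)
      = (a : ℤ) + (b : ℤ) - 2 * ((min b a : ℕ) : ℤ) := by
    intro a b; omega
  have habs : ∀ S' : Finset β, S'.card = N →
      ((∑ i : Fin k, (((S'.filter (fun x => levC x = i)).card : ℤ) - (t i : ℤ)).natAbs : ℕ) : ℤ)
        = 2 * N - 2 * ((∑ i : Fin k, min (t i) ((S'.filter (fun x => levC x = i)).card) : ℕ) : ℤ) := by
    intro S' hcard
    rw [Nat.cast_sum]
    rw [Finset.sum_congr rfl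
      (fun i _ => key ((S'.filter (fun x => levC x = i)).card) (t i))]
    rw [Finset.sum_sub_distrib, Finset.sum_add_distrib, ← Finset.mul_sum]
    have h1 : ∑ i : Fin k, (((S'.filter (fun x => levC x = i)).card : ℕ) : ℤ) = (N : ℤ) := by
      rw [← Nat.cast_sum, hsum_fiber, hcard]
    have h2 : ∑ i : Fin k, ((t i : ℕ) : ℤ) = (N : ℤ) := by rw [← Nat.cast_sum, hT]
    rw [h1, h2, Nat.cast_sum]
    ring
  constructor
  · -- membership: construct S'
    have hex : ∀ i : Fin k, ∃ D ⊆ C.filter (fun x => levC x = i),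
        D.card = min (t i) ((C.filter (fun x => levC x = i)).card) :=
      fun i => Finset.exists_subset_card_eq (min_le_right _ _)
    choose D hD hDcard using hex
    have hD0sub : Finset.univ.biUnion D ⊆ C := by
      intro x hx
      rcases Finset.mem_biUnion.mp hx with ⟨i, -, hxi⟩
      exact (Finset.mem_filter.mp (hD i hxi)).1
    have hD0card : (Finset.univ.biUnion D).card
        = ∑ i : Fin k, min (t i) ((C.filter (fun x => levC x = i)).card) := by
      rw [Finset.card_biUnion]
      · exact Finset.sum_congr rfl fun i _ => hDcard i
      · intro i _ j _ hij
        refine Finset.disjoint_left.mpr fun x hxi hxj => hij ?_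
        have h1 := (Finset.mem_filter.mp (hD i hxi)).2
        have h2 := (Finset.mem_filter.mp (hD j hxj)).2
        rw [← h1, ← h2]
    obtain ⟨S', hDS, hSC, hScard⟩ :=
      Finset.exists_subsuperset_card_eq hD0sub (by rw [hD0card]; exact hMle) hC
    refine ⟨S', hSC, hScard, ?_⟩
    have hmin : ∀ i : Fin k, min (t i) ((S'.filter (fun x => levC x = i)).card)
        = min (t i) ((C.filter (fun x => levC x = i)).card) := by
      intro i
      have hle1 : min (t i) ((C.filter (fun x => levC x = i)).card)
          ≤ (S'.filter (fun x => levC x = i)).card := by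
        rw [← hDcard i]
        apply Finset.card_le_card
        intro x hx
        refine Finset.mem_filter.mpr ⟨hDS (Finset.mem_biUnion.mpr ⟨i, Finset.mem_univ i, hx⟩),
          (Finset.mem_filter.mp (hD i hx)).2⟩
      have hle2 : (S'.filter (fun x => levC x = i)).card
          ≤ (C.filter (fun x => levC x = i)).card :=
        Finset.card_le_card (Finset.filter_subset_filter _ hSC)
      omega
    have := habs S' hScard
    rw [Finset.sum_congr rfl (fun i _ => hmin i)] at this
    omega
  · -- lower bound
    rintro v ⟨S', hSC, hScard, rfl⟩
    have hle : ∑ i : Fin k, min (t i) ((S'.filter (fun x => levC x = i)).card)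
        ≤ ∑ i : Fin k, min (t i) ((C.filter (fun x => levC x = i)).card) := by
      refine Finset.sum_le_sum fun i _ => min_le_min le_rfl ?_
      exact Finset.card_le_card (Finset.filter_subset_filter _ hSC)
    have := habs S' hScard
    omega


/-- For the 1-covariate minimum κ-imbalance problem, the minimum of
`∑ᵢ | |S'∩L'ᵢ| − κ·ℓᵢ |` over `S' ⊆ C` with `|S'| = κ·n` equals
`∑ᵢ (κ·ℓᵢ − min(κ·ℓᵢ, ℓ'ᵢ)) + max(0, κ·n − ∑ᵢ min(κ·ℓᵢ, ℓ'ᵢ))` (natural subtraction is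
truncated); in particular, when `∑ᵢ min(κ·ℓᵢ, ℓ'ᵢ) = κ·n` the minimum imbalance is
`∑ᵢ max(0, κ·ℓᵢ − ℓ'ᵢ)`. -/
theorem stmt_19 {β : Type*} (k n κ : ℕ) (hκ : 0 < κ)
    (C : Finset β) (levC : β → Fin k) (ℓ : Fin k → ℕ)
    (hn : ∑ i, ℓ i = n) (hC : κ * n ≤ C.card) :
    IsLeast
      {m : ℕ | ∃ S' ⊆ C, S'.card = κ * n ∧
        ∑ i : Fin k,
          (((S'.filter (fun c => levC c = i)).card : ℤ) - κ * ℓ i).natAbs = m}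
      ((∑ i : Fin k,
          (κ * ℓ i - min (κ * ℓ i) ((C.filter (fun c => levC c = i)).card)))
        + (κ * n - ∑ i : Fin k,
            min (κ * ℓ i) ((C.filter (fun c => levC c = i)).card))) ∧
    ((∑ i : Fin k, min (κ * ℓ i) ((C.filter (fun c => levC c = i)).card) = κ * n) →
      IsLeast
        {m : ℕ | ∃ S' ⊆ C, S'.card = κ * n ∧
          ∑ i : Fin k,
            (((S'.filter (fun c => levC c = i)).card : ℤ) - κ * ℓ i).natAbs = m}
        (∑ i : Fin k, (κ * ℓ i - (C.filter (fun c => levC c = i)).card))) := by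
  have hT : ∑ i : Fin k, κ * ℓ i = κ * n := by rw [← Finset.mul_sum, hn]
  have h1 := aux19 C levC (fun i => κ * ℓ i) hT hC
  simp only [Nat.cast_mul] at h1
  constructor
  · exact h1
  · intro hEq
    have hval : (∑ i : Fin k,
          (κ * ℓ i - min (κ * ℓ i) ((C.filter (fun c => levC c = i)).card)))
        + (κ * n - ∑ i : Fin k,
            min (κ * ℓ i) ((C.filter (fun c => levC c = i)).card))
        = ∑ i : Fin k, (κ * ℓ i - (C.filter (fun c => levC c = i)).card) := by
      rw [hEq, Nat.sub_self, Nat.add_zero]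
      exact Finset.sum_congr rfl fun i _ => by omega
    rw [← hval]
    exact h1
end
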